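/- arXiv:2211.17241 — 4 statements merged into one kernel-verified Lean document; each statement's English description precedes it below -/
import Mathlib

section
/- There exists a number r₀ > 0 such that for every T_max ∈ (t₀, ∞) and every C¹ function y : [t₀, T_max) → ℝⁿ with y(t) ≠ 0 for all t ∈ [t₀, T_max), 0 < |y(t₀)| ≤ r₀, satisfying y'(t) = −H(y(t))·(A y(t)) + G(t, y(t)) for all t ∈ (t₀, T_max), and satisfying the escape property (for every compact set U ⊆ ℝⁿ∖{0} there exists τ ∈ [t₀, T_max) such that y(t) ∉ U for all t ∈ (τ, T_max)), one has lim_{t → T_max⁻} y(t) = 0; that is, T_max is the extinction time of y. -/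
open Set Real Filter Topology MeasureTheory

noncomputable section

/-- The action of an `n × n` real matrix on `EuclideanSpace ℝ (Fin n)` by
matrix-vector multiplication. -/
def mulVecE {n : ℕ} (A : Matrix (Fin n) (Fin n) ℝ) (x : EuclideanSpace ℝ (Fin n)) :
    EuclideanSpace ℝ (Fin n) :=
  WithLp.toLp 2 (A.mulVec x)

/-- `mulVecE` as a continuous linear map. -/
def matCLM {n : ℕ} (M : Matrix (Fin n) (Fin n) ℝ) :
    EuclideanSpace ℝ (Fin n) →L[ℝ] EuclideanSpace ℝ (Fin n) :=
  LinearMap.toContinuousLinearMap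
    { toFun := fun x => mulVecE M x
      map_add' := fun x y => by simp [mulVecE, Matrix.mulVec_add]
      map_smul' := fun c x => by simp [mulVecE, Matrix.mulVec_smul] }

set_option maxHeartbeats 1000000 in
open RealInnerProductSpace in
theorem tmax_is_extinction_time (n : ℕ) (hn : 1 ≤ n)
    (A : Matrix (Fin n) (Fin n) ℝ)
    (hA : ∃ S D : Matrix (Fin n) (Fin n) ℝ, IsUnit S ∧ D.IsDiag ∧
      (∀ i, 0 < D i i) ∧ A = S⁻¹ * D * S)
    (α : ℝ) (hα : 0 < α)
    (H : EuclideanSpace ℝ (Fin n) → ℝ)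
    (hHhom : ∀ x : EuclideanSpace ℝ (Fin n), x ≠ 0 → ∀ s : ℝ, 0 < s →
      H (s • x) = s ^ (-α) * H x)
    (hHpos : ∀ x : EuclideanSpace ℝ (Fin n), x ≠ 0 → 0 < H x)
    (hHcont : ContinuousOn H {x : EuclideanSpace ℝ (Fin n) | x ≠ 0})
    (t₀ : ℝ) (ht₀ : 0 ≤ t₀)
    (G : ℝ → EuclideanSpace ℝ (Fin n) → EuclideanSpace ℝ (Fin n))
    (hGcont : ContinuousOn (fun p : ℝ × EuclideanSpace ℝ (Fin n) => G p.1 p.2)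
      ((Ici t₀) ×ˢ {x : EuclideanSpace ℝ (Fin n) | x ≠ 0}))
    (cs rs δ : ℝ) (hcs : 0 < cs) (hrs : 0 < rs) (hδ : 0 < δ)
    (hG : ∀ t, t₀ ≤ t → ∀ x : EuclideanSpace ℝ (Fin n), x ≠ 0 → ‖x‖ ≤ rs →
      ‖G t x‖ ≤ cs * ‖x‖ ^ (1 - α + δ))
    :
    ∃ r₀ : ℝ, 0 < r₀ ∧
      ∀ Tmax : ℝ, t₀ < Tmax →
      ∀ y : ℝ → EuclideanSpace ℝ (Fin n),
        ContinuousOn y (Ico t₀ Tmax) →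
        (∀ t ∈ Ico t₀ Tmax, y t ≠ 0) →
        (0 < ‖y t₀‖ ∧ ‖y t₀‖ ≤ r₀) →
        (∀ t ∈ Ioo t₀ Tmax, HasDerivAt y (-(H (y t)) • mulVecE A (y t) + G t (y t)) t) →
        (∀ U : Set (EuclideanSpace ℝ (Fin n)), IsCompact U →
          U ⊆ {x : EuclideanSpace ℝ (Fin n) | x ≠ 0} →
          ∃ τ ∈ Ico t₀ Tmax, ∀ t ∈ Ioo τ Tmax, y t ∉ U) →
        Tendsto y (𝓝[<] Tmax) (𝓝 0) := by
  classical
  obtain ⟨S, Dm, hSu, hDdiag, hDpos, hAeq⟩ := hA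
  haveI : Nonempty (Fin n) := ⟨⟨0, hn⟩⟩
  have hdet : IsUnit S.det := (Matrix.isUnit_iff_isUnit_det S).mp hSu
  -- constants for S and S⁻¹
  set CS : ℝ := max ‖matCLM S‖ 1 with hCSdef
  set CI : ℝ := max ‖matCLM S⁻¹‖ 1 with hCIdef
  have hCS1 : (1:ℝ) ≤ CS := le_max_right _ _
  have hCI1 : (1:ℝ) ≤ CI := le_max_right _ _
  have hCS : 0 < CS := lt_of_lt_of_le one_pos hCS1
  have hCI : 0 < CI := lt_of_lt_of_le one_pos hCI1
  have hSb : ∀ x : EuclideanSpace ℝ (Fin n), ‖mulVecE S x‖ ≤ CS * ‖x‖ := fun x =>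
    le_trans ((matCLM S).le_opNorm x)
      (mul_le_mul_of_nonneg_right (le_max_left _ _) (norm_nonneg _))
  have hinv : ∀ x : EuclideanSpace ℝ (Fin n), mulVecE S⁻¹ (mulVecE S x) = x := by
    intro x
    show WithLp.toLp 2 (S⁻¹.mulVec (S.mulVec x.ofLp)) = x
    rw [Matrix.mulVec_mulVec, Matrix.nonsing_inv_mul S hdet, Matrix.one_mulVec]
  have hIb : ∀ x : EuclideanSpace ℝ (Fin n), ‖x‖ ≤ CI * ‖mulVecE S x‖ := by
    intro x
    calc ‖x‖ = ‖mulVecE S⁻¹ (mulVecE S x)‖ := by rw [hinv]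
      _ ≤ CI * ‖mulVecE S x‖ := le_trans ((matCLM S⁻¹).le_opNorm _)
            (mul_le_mul_of_nonneg_right (le_max_left _ _) (norm_nonneg _))
  -- smallest eigenvalue
  obtain ⟨i₀, -, hi₀⟩ := Finset.exists_min_image Finset.univ (fun i => Dm i i)
    ⟨Classical.arbitrary (Fin n), Finset.mem_univ _⟩
  set lam : ℝ := Dm i₀ i₀ with hlamdef
  have hlam : 0 < lam := hDpos i₀
  have hlam_le : ∀ i, lam ≤ Dm i i := fun i => hi₀ i (Finset.mem_univ i)
  -- quadratic form bound for D
  have hD : ∀ w : EuclideanSpace ℝ (Fin n), lam * ⟪w, w⟫ ≤ ⟪w, mulVecE Dm w⟫ := by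
    intro w
    have h1 : ∀ i, (mulVecE Dm w) i = Dm i i * w i := by
      intro i
      show (Finset.univ.sum fun j => Dm i j * w.ofLp j) = _
      rw [Finset.sum_eq_single i]
      · intro j _ hj; rw [hDdiag (Ne.symm hj), zero_mul]
      · intro h; exact absurd (Finset.mem_univ i) h
    simp only [PiLp.inner_apply, RCLike.inner_apply, starRingEnd_apply, star_trivial, h1]
    rw [Finset.mul_sum]
    refine Finset.sum_le_sum fun i _ => ?_
    nlinarith [mul_le_mul_of_nonneg_right (hlam_le i) (mul_self_nonneg (w i))]
  -- lower bound for H on the unit sphere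
  have hsne : (Metric.sphere (0 : EuclideanSpace ℝ (Fin n)) 1).Nonempty :=
    NormedSpace.sphere_nonempty.mpr zero_le_one
  have hssub : Metric.sphere (0 : EuclideanSpace ℝ (Fin n)) 1 ⊆
      {x : EuclideanSpace ℝ (Fin n) | x ≠ 0} := by
    intro x hx
    have h1 : ‖x‖ = 1 := mem_sphere_zero_iff_norm.mp hx
    simp only [mem_setOf_eq]
    intro h; rw [h] at h1; simp at h1
  obtain ⟨x₀, hx₀s, hx₀min⟩ :=
    (isCompact_sphere (0:EuclideanSpace ℝ (Fin n)) 1).exists_isMinOn hsne (hHcont.mono hssub)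
  set cH : ℝ := H x₀ with hcHdef
  have hcH : 0 < cH := hHpos x₀ (hssub hx₀s)
  have hHlow : ∀ x : EuclideanSpace ℝ (Fin n), x ≠ 0 → cH * ‖x‖ ^ (-α) ≤ H x := by
    intro x hx
    have hr : 0 < ‖x‖ := norm_pos_iff.mpr hx
    set u : EuclideanSpace ℝ (Fin n) := ‖x‖⁻¹ • x with hudef
    have hu1 : ‖u‖ = 1 := norm_smul_inv_norm hx
    have hune : u ≠ 0 := by intro h; rw [h] at hu1; simp at hu1
    have hxu : ‖x‖ • u = x := smul_inv_smul₀ hr.ne' x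
    have hHx : H x = ‖x‖ ^ (-α) * H u := by
      conv_lhs => rw [← hxu]
      exact hHhom u hune ‖x‖ hr
    have hcu : cH ≤ H u := hx₀min (mem_sphere_zero_iff_norm.mpr hu1)
    rw [hHx, mul_comm cH]
    exact mul_le_mul_of_nonneg_left hcu (rpow_pos_of_pos hr _).le
  -- choice of ρ and r₀
  set K : ℝ := lam * cH / (CS * cs * CI) with hKdef
  have hK : 0 < K := div_pos (mul_pos hlam hcH) (by positivity)
  set ρ : ℝ := min rs (K ^ (1/δ)) with hρdef
  have hρ : 0 < ρ := lt_min hrs (rpow_pos_of_pos hK _)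
  have hρrs : ρ ≤ rs := min_le_left _ _
  have hQfact : ∀ r : ℝ, 0 ≤ r → r ≤ ρ → CS * cs * CI * r ^ δ ≤ lam * cH := by
    intro r hr0 hrρ
    have h1 : r ^ δ ≤ (K ^ (1/δ)) ^ δ :=
      Real.rpow_le_rpow hr0 (le_trans hrρ (min_le_right _ _)) hδ.le
    have h2 : (K ^ (1/δ)) ^ δ = K := by
      rw [← Real.rpow_mul hK.le, one_div_mul_cancel hδ.ne', Real.rpow_one]
    have h3 : r ^ δ ≤ K := h2 ▸ h1
    have h4 : CS * cs * CI * K = lam * cH := by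
      rw [hKdef]; field_simp
    calc CS * cs * CI * r ^ δ ≤ CS * cs * CI * K :=
          mul_le_mul_of_nonneg_left h3 (by positivity)
      _ = lam * cH := h4
  -- the key pointwise derivative bound
  have hkey : ∀ (x g : EuclideanSpace ℝ (Fin n)), x ≠ 0 → ‖x‖ ≤ ρ →
      ‖g‖ ≤ cs * ‖x‖ ^ (1 - α + δ) →
      ⟪mulVecE S x, mulVecE S (-(H x) • mulVecE A x + g)⟫ +
        ⟪mulVecE S (-(H x) • mulVecE A x + g), mulVecE S x⟫ ≤ 0 := by
    intro x g hx hxρ hgb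
    set z : EuclideanSpace ℝ (Fin n) := mulVecE S x with hzdef
    have hr : 0 < ‖x‖ := norm_pos_iff.mpr hx
    have hnz : 0 < ‖z‖ := by
      by_contra h
      push_neg at h
      have : ‖x‖ ≤ CI * ‖z‖ := hIb x
      nlinarith
    have hSA : mulVecE S (mulVecE A x) = mulVecE Dm z := by
      show WithLp.toLp 2 (S.mulVec (A.mulVec x.ofLp)) = WithLp.toLp 2 (Dm.mulVec (S.mulVec x.ofLp))
      rw [Matrix.mulVec_mulVec, Matrix.mulVec_mulVec, hAeq, ← Matrix.mul_assoc,
        ← Matrix.mul_assoc, Matrix.mul_nonsing_inv S hdet, Matrix.one_mul]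
    have hsplit : mulVecE S (-(H x) • mulVecE A x + g)
        = (-(H x)) • mulVecE Dm z + mulVecE S g := by
      calc mulVecE S (-(H x) • mulVecE A x + g)
          = matCLM S (-(H x) • mulVecE A x + g) := rfl
        _ = (-(H x)) • matCLM S (mulVecE A x) + matCLM S g := by
            rw [map_add, _root_.map_smul]
        _ = (-(H x)) • mulVecE S (mulVecE A x) + mulVecE S g := rfl
        _ = _ := by rw [hSA]
    have hip : ⟪z, mulVecE S (-(H x) • mulVecE A x + g)⟫
        = -(H x) * ⟪z, mulVecE Dm z⟫ + ⟪z, mulVecE S g⟫ := by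
      rw [hsplit, inner_add_right, real_inner_smul_right]
    have hcomm : ⟪mulVecE S (-(H x) • mulVecE A x + g), z⟫
        = ⟪z, mulVecE S (-(H x) • mulVecE A x + g)⟫ := real_inner_comm _ _
    -- numeric bounds
    have hzz : ⟪z, z⟫ = ‖z‖ * ‖z‖ := real_inner_self_eq_norm_mul_norm z
    have hF2 : lam * (‖z‖ * ‖z‖) ≤ ⟪z, mulVecE Dm z⟫ := by rw [← hzz]; exact hD z
    have hF1 : cH * ‖x‖ ^ (-α) ≤ H x := hHlow x hx
    have hF3 : ⟪z, mulVecE S g⟫ ≤ ‖z‖ * (CS * ‖g‖) := by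
      calc ⟪z, mulVecE S g⟫ ≤ ‖z‖ * ‖mulVecE S g‖ := real_inner_le_norm _ _
        _ ≤ ‖z‖ * (CS * ‖g‖) := mul_le_mul_of_nonneg_left (hSb g) (norm_nonneg _)
    have hF5 : ‖x‖ ≤ CI * ‖z‖ := hIb x
    have hF6 : CS * cs * CI * ‖x‖ ^ δ ≤ lam * cH := hQfact ‖x‖ hr.le hxρ
    set P : ℝ := ‖x‖ ^ (-α) with hPdef
    set Q : ℝ := ‖x‖ ^ δ with hQdef
    have hP : 0 < P := rpow_pos_of_pos hr _
    have hQ0 : 0 < Q := rpow_pos_of_pos hr _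
    have hsplitpow : ‖x‖ ^ (1 - α + δ) = P * (‖x‖ * Q) := by
      rw [hPdef, hQdef, show (1 - α + δ) = (-α) + (1 + δ) by ring, Real.rpow_add hr,
        Real.rpow_add hr, Real.rpow_one]
    -- chain
    have hI2 : ⟪z, mulVecE S g⟫ ≤ (CS * cs * CI * Q) * (P * (‖z‖ * ‖z‖)) := by
      have s1 : ⟪z, mulVecE S g⟫ ≤ ‖z‖ * (CS * (cs * (P * (‖x‖ * Q)))) := by
        refine le_trans hF3 ?_
        have hgb' : ‖g‖ ≤ cs * (P * (‖x‖ * Q)) := by rw [← hsplitpow]; exact hgb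
        exact mul_le_mul_of_nonneg_left
          (mul_le_mul_of_nonneg_left hgb' hCS.le) (norm_nonneg z)
      have s2 : ‖z‖ * (CS * (cs * (P * (‖x‖ * Q)))) ≤
          ‖z‖ * (CS * (cs * (P * ((CI * ‖z‖) * Q)))) := by gcongr
      have s3 : ‖z‖ * (CS * (cs * (P * ((CI * ‖z‖) * Q)))) =
          (CS * cs * CI * Q) * (P * (‖z‖ * ‖z‖)) := by ring
      linarith
    have hI1 : (lam * cH) * (P * (‖z‖ * ‖z‖)) ≤ H x * ⟪z, mulVecE Dm z⟫ := by
      have hm : 0 ≤ lam * (‖z‖ * ‖z‖) := by positivity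
      calc (lam * cH) * (P * (‖z‖ * ‖z‖)) = (cH * P) * (lam * (‖z‖ * ‖z‖)) := by ring
        _ ≤ H x * (lam * (‖z‖ * ‖z‖)) := mul_le_mul_of_nonneg_right hF1 hm
        _ ≤ H x * ⟪z, mulVecE Dm z⟫ :=
            mul_le_mul_of_nonneg_left hF2 (hHpos x hx).le
    have hI3 : (CS * cs * CI * Q) * (P * (‖z‖ * ‖z‖)) ≤ (lam * cH) * (P * (‖z‖ * ‖z‖)) :=
      mul_le_mul_of_nonneg_right hF6 (by positivity)
    have hfin : ⟪z, mulVecE S (-(H x) • mulVecE A x + g)⟫ ≤ 0 := by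
      rw [hip]; linarith
    rw [hcomm]
    linarith
  -- now the main argument
  refine ⟨ρ / (2 * CS * CI), by positivity, ?_⟩
  intro Tmax hT y hycont hyne hy0 hy' hesc
  obtain ⟨hy0pos, hy0le⟩ := hy0
  set b : ℝ := ρ / CI with hbdef
  have hb : 0 < b := by positivity
  have hCIb : CI * b = ρ := by rw [hbdef]; field_simp
  set z : ℝ → EuclideanSpace ℝ (Fin n) := fun t => mulVecE S (y t) with hzdef
  set W : ℝ → ℝ := fun t => ⟪z t, z t⟫ with hWdef
  have hzcont : ContinuousOn z (Ico t₀ Tmax) := (matCLM S).continuous.comp_continuousOn hycont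
  have hWcont : ContinuousOn W (Ico t₀ Tmax) := hzcont.inner hzcont
  have ht₀mem : t₀ ∈ Ico t₀ Tmax := ⟨le_refl _, hT⟩
  have hzt₀ : ‖z t₀‖ < b := by
    have h1 : ‖z t₀‖ ≤ CS * ‖y t₀‖ := hSb (y t₀)
    have h2 : CS * ‖y t₀‖ ≤ CS * (ρ / (2 * CS * CI)) :=
      mul_le_mul_of_nonneg_left hy0le hCS.le
    have h3 : CS * (ρ / (2 * CS * CI)) = ρ / (2 * CI) := by field_simp
    have h4 : ρ / (2 * CI) < ρ / CI := by
      rw [div_lt_div_iff₀ (by positivity) hCI]; nlinarith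
    calc ‖z t₀‖ ≤ CS * (ρ / (2 * CS * CI)) := le_trans h1 h2
      _ = ρ / (2 * CI) := h3
      _ < b := h4
  have hWd : ∀ t ∈ Ioo t₀ Tmax, HasDerivAt W
      (⟪z t, mulVecE S (-(H (y t)) • mulVecE A (y t) + G t (y t))⟫ +
       ⟪mulVecE S (-(H (y t)) • mulVecE A (y t) + G t (y t)), z t⟫) t := by
    intro t ht
    have h1 : HasDerivAt z (mulVecE S (-(H (y t)) • mulVecE A (y t) + G t (y t))) t :=
      (matCLM S).hasFDerivAt.comp_hasDerivAt t (hy' t ht)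
    exact h1.inner ℝ h1
  -- invariance: ‖z t‖ < b for all t
  have hzb : ∀ t ∈ Ico t₀ Tmax, ‖z t‖ < b := by
    by_contra hcon
    push_neg at hcon
    obtain ⟨t', ht', hbt'⟩ := hcon
    set bad : Set ℝ := {t | t ∈ Ico t₀ Tmax ∧ b ≤ ‖z t‖} with hbaddef
    have hbne : bad.Nonempty := ⟨t', ht', hbt'⟩
    have hbdd : BddBelow bad := ⟨t₀, fun s hs => hs.1.1⟩
    set t₁ : ℝ := sInf bad with ht₁def
    have ht₁t₀ : t₀ ≤ t₁ := le_csInf hbne fun s hs => hs.1.1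
    have ht₁lt : t₁ < Tmax := lt_of_le_of_lt (csInf_le hbdd ⟨ht', hbt'⟩) ht'.2
    have ht₁mem : t₁ ∈ Ico t₀ Tmax := ⟨ht₁t₀, ht₁lt⟩
    have hNcont : ContinuousOn (fun t => ‖z t‖) (Ico t₀ Tmax) := hzcont.norm
    have hbt₁ : b ≤ ‖z t₁‖ := by
      by_contra hlt
      push_neg at hlt
      have hcw : ContinuousWithinAt (fun t => ‖z t‖) (Ico t₀ Tmax) t₁ := hNcont t₁ ht₁mem
      rw [Metric.continuousWithinAt_iff] at hcw
      obtain ⟨d, hd, hball⟩ := hcw (b - ‖z t₁‖) (by linarith)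
      obtain ⟨s, hsbad, hslt⟩ := (csInf_lt_iff hbdd hbne).mp
        (show sInf bad < t₁ + d by rw [← ht₁def]; linarith)
      have hst₁ : t₁ ≤ s := csInf_le hbdd hsbad
      have hds : dist s t₁ < d := by
        rw [Real.dist_eq, abs_of_nonneg (by linarith)]; linarith
      have h5 := hball hsbad.1 hds
      rw [Real.dist_eq] at h5
      have h6 := abs_lt.mp h5
      linarith [hsbad.2]
    have ht₀lt : t₀ < t₁ := by
      rcases eq_or_lt_of_le ht₁t₀ with h | h
      · exfalso; rw [← h] at hbt₁; linarith
      · exact h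
    have hsub : Icc t₀ t₁ ⊆ Ico t₀ Tmax := fun s hs => ⟨hs.1, lt_of_le_of_lt hs.2 ht₁lt⟩
    have hintsub : Ioo t₀ t₁ ⊆ Ioo t₀ Tmax := fun s hs => ⟨hs.1, lt_trans hs.2 ht₁lt⟩
    have hless : ∀ s ∈ Ioo t₀ t₁, ‖z s‖ < b := by
      intro s hs
      by_contra hge; push_neg at hge
      have hsmem : s ∈ bad := ⟨⟨hs.1.le, lt_trans hs.2 ht₁lt⟩, hge⟩
      exact absurd (csInf_le hbdd hsmem) (not_le.mpr hs.2)
    have hanti : AntitoneOn W (Icc t₀ t₁) := by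
      apply antitoneOn_of_deriv_nonpos (convex_Icc t₀ t₁) (hWcont.mono hsub)
      · intro s hs
        rw [interior_Icc] at hs
        exact ((hWd s (hintsub hs)).differentiableAt).differentiableWithinAt
      · intro s hs
        rw [interior_Icc] at hs
        have hsI : s ∈ Ioo t₀ Tmax := hintsub hs
        have hsIco : s ∈ Ico t₀ Tmax := ⟨hsI.1.le, hsI.2⟩
        rw [(hWd s hsI).deriv]
        have hyρ : ‖y s‖ ≤ ρ := by
          have h1 : ‖y s‖ ≤ CI * ‖z s‖ := hIb (y s)
          have h2 : ‖z s‖ < b := hless s hs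
          nlinarith
        exact hkey (y s) (G s (y s)) (hyne s hsIco) hyρ
          (hG s hs.1.le (y s) (hyne s hsIco) (le_trans hyρ hρrs))
    have hW10 : W t₁ ≤ W t₀ := hanti ⟨le_rfl, ht₀lt.le⟩ ⟨ht₀lt.le, le_rfl⟩ ht₀lt.le
    have hWnorm : ∀ s, W s = ‖z s‖ * ‖z s‖ := fun s => real_inner_self_eq_norm_mul_norm _
    have h1 : ‖z t₁‖ ≤ ‖z t₀‖ := by
      have h2 := hW10
      rw [hWnorm, hWnorm] at h2
      nlinarith [norm_nonneg (z t₁), norm_nonneg (z t₀)]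
    linarith
  -- all of y stays in the ball of radius ρ
  have hyρall : ∀ t ∈ Ico t₀ Tmax, ‖y t‖ < ρ := by
    intro t ht
    have h1 := hIb (y t)
    have h2 := hzb t ht
    nlinarith
  -- conclude the limit
  rw [NormedAddCommGroup.tendsto_nhds_zero]
  intro ε hε
  set ε2 : ℝ := min ε ρ with hε2def
  have hε2 : 0 < ε2 := lt_min hε hρ
  set U : Set (EuclideanSpace ℝ (Fin n)) :=
    Metric.closedBall 0 ρ \ Metric.ball 0 ε2 with hUdef
  have hUcomp : IsCompact U := (isCompact_closedBall (0:EuclideanSpace ℝ (Fin n)) ρ).diff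
    Metric.isOpen_ball
  have hUsub : U ⊆ {x : EuclideanSpace ℝ (Fin n) | x ≠ 0} := by
    intro x hx
    simp only [mem_setOf_eq]
    intro h0
    apply hx.2
    rw [h0]
    exact Metric.mem_ball_self hε2
  obtain ⟨τ, hτ, hτav⟩ := hesc U hUcomp hUsub
  have hIoo : Ioo τ Tmax ∈ 𝓝[<] Tmax := Ioo_mem_nhdsLT_of_mem ⟨hτ.2, le_rfl⟩
  filter_upwards [hIoo] with t ht
  have htI : t ∈ Ico t₀ Tmax := ⟨hτ.1.trans ht.1.le, ht.2⟩
  have h1 : ‖y t‖ < ρ := hyρall t htI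
  have h2 : y t ∉ U := hτav t ht
  have h3 : y t ∈ Metric.closedBall (0:EuclideanSpace ℝ (Fin n)) ρ := by
    rw [Metric.mem_closedBall, dist_zero_right]; exact h1.le
  have h4 : y t ∈ Metric.ball (0:EuclideanSpace ℝ (Fin n)) ε2 := by
    by_contra h5
    exact h2 ⟨h3, h5⟩
  rw [Metric.mem_ball, dist_zero_right] at h4
  exact lt_of_lt_of_le h4 (min_le_left _ _)
end
end

section
/- Let r₀ > 0 satisfy c*(2r₀)^δ ≤ c₁Λ₁/2 and 2r₀ ≤ r*. Then for every T ∈ (t₀, ∞] and every C¹ function y : [t₀, T) → ℝⁿ with y(t) ≠ 0 for all t ∈ [t₀, T), |y(t₀)| ≤ r₀, and y'(t) = −H(y(t))·(A y(t)) + G(t, y(t)) for all t ∈ (t₀, T), one has |y(t)| < 2r₀ for all t ∈ [t₀, T) and |y(t)|^α ≤ |y(t₀)|^α − α·(c₁Λ₁/2)·(t − t₀) for all t ∈ [t₀, T). -/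
open Set Real Filter Topology MeasureTheory

noncomputable section

theorem small_solutions_decrease (n : ℕ) (hn : 1 ≤ n)
    (A : Matrix (Fin n) (Fin n) ℝ) (hAsymm : A.IsSymm)
    (Λ₁ : ℝ) (hΛ₁ : 0 < Λ₁)
    (hcoer : ∀ x : EuclideanSpace ℝ (Fin n), Λ₁ * ‖x‖ ^ 2 ≤ (inner ℝ x (mulVecE A x) : ℝ))
    (α : ℝ) (hα : 0 < α)
    (H : EuclideanSpace ℝ (Fin n) → ℝ)
    (hHhom : ∀ x : EuclideanSpace ℝ (Fin n), x ≠ 0 → ∀ s : ℝ, 0 < s →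
      H (s • x) = s ^ (-α) * H x)
    (hHpos : ∀ x : EuclideanSpace ℝ (Fin n), ‖x‖ = 1 → 0 < H x)
    (hHcont : ContinuousOn H (Metric.sphere (0 : EuclideanSpace ℝ (Fin n)) 1))
    (c₁ : ℝ) (hc₁pos : 0 < c₁)
    (hc₁le : ∀ x : EuclideanSpace ℝ (Fin n), ‖x‖ = 1 → c₁ ≤ H x)
    (hc₁min : ∃ x : EuclideanSpace ℝ (Fin n), ‖x‖ = 1 ∧ H x = c₁)
    (t₀ : ℝ) (ht₀ : 0 ≤ t₀)
    (G : ℝ → EuclideanSpace ℝ (Fin n) → EuclideanSpace ℝ (Fin n))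
    (hGcont : ContinuousOn (fun p : ℝ × EuclideanSpace ℝ (Fin n) => G p.1 p.2)
      ((Ici t₀) ×ˢ {x : EuclideanSpace ℝ (Fin n) | x ≠ 0}))
    (cs rs δ : ℝ) (hcs : 0 < cs) (hrs : 0 < rs) (hδ : 0 < δ)
    (hG : ∀ t, t₀ ≤ t → ∀ x : EuclideanSpace ℝ (Fin n), x ≠ 0 → ‖x‖ ≤ rs →
      ‖G t x‖ ≤ cs * ‖x‖ ^ (1 - α + δ))
    (r₀ : ℝ) (hr₀pos : 0 < r₀)
    (hr₀1 : cs * (2 * r₀) ^ δ ≤ c₁ * Λ₁ / 2) (hr₀2 : 2 * r₀ ≤ rs) :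
    ∀ I : Set ℝ, ((∃ T : ℝ, t₀ < T ∧ I = Ico t₀ T) ∨ I = Ici t₀) →
    ∀ y : ℝ → EuclideanSpace ℝ (Fin n),
      ContinuousOn y I →
      (∀ t ∈ I, y t ≠ 0) →
      ‖y t₀‖ ≤ r₀ →
      (∀ t ∈ interior I, HasDerivAt y (-(H (y t)) • mulVecE A (y t) + G t (y t)) t) →
      ∀ t ∈ I, ‖y t‖ < 2 * r₀ ∧
        ‖y t‖ ^ α ≤ ‖y t₀‖ ^ α - α * (c₁ * Λ₁ / 2) * (t - t₀) := by
  intro I hI y hycont hyne hy0 hyderiv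
  have hsubI : I ⊆ Ici t₀ := by
    rcases hI with ⟨T, hT, rfl⟩ | rfl
    · exact Ico_subset_Ici_self
    · exact subset_rfl
  have ht₀I : t₀ ∈ I := by
    rcases hI with ⟨T, hT, rfl⟩ | rfl
    · exact ⟨le_rfl, hT⟩
    · exact Set.mem_Ici.mpr le_rfl
  have hIccI : ∀ t ∈ I, Icc t₀ t ⊆ I := by
    rcases hI with ⟨T, hT, rfl⟩ | rfl
    · intro t ht s hs; exact ⟨hs.1, lt_of_le_of_lt hs.2 ht.2⟩
    · intro t ht s hs; exact hs.1
  have hIooI : ∀ t ∈ I, Ioo t₀ t ⊆ interior I := by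
    rcases hI with ⟨T, hT, rfl⟩ | rfl
    · intro t ht; rw [interior_Ico]
      intro s hs; exact ⟨hs.1, hs.2.trans ht.2⟩
    · intro t ht; rw [interior_Ici]
      intro s hs; exact hs.1
  set m : ℝ := α * (c₁ * Λ₁ / 2) with hm_def
  have hcpos : 0 < c₁ * Λ₁ / 2 := by positivity
  have hm : 0 < m := by positivity
  -- lower bound on H
  have hHlow : ∀ x : EuclideanSpace ℝ (Fin n), x ≠ 0 → c₁ * ‖x‖ ^ (-α) ≤ H x := by
    intro x hx
    have hxn : (0:ℝ) < ‖x‖ := norm_pos_iff.mpr hx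
    have hune : (‖x‖⁻¹ • x) ≠ 0 := smul_ne_zero (by positivity) hx
    have hu : ‖(‖x‖⁻¹ • x)‖ = 1 := by
      rw [norm_smul, norm_inv, norm_norm, inv_mul_cancel₀ hxn.ne']
    have hhom := hHhom (‖x‖⁻¹ • x) hune ‖x‖ hxn
    rw [smul_smul, mul_inv_cancel₀ hxn.ne', one_smul] at hhom
    rw [hhom, mul_comm]
    have := hc₁le _ hu
    have hp : (0:ℝ) < ‖x‖ ^ (-α) := Real.rpow_pos_of_pos hxn _
    nlinarith
  -- key inner-product bound
  have hkey : ∀ t, t₀ ≤ t → ∀ x : EuclideanSpace ℝ (Fin n), x ≠ 0 → ‖x‖ ≤ 2 * r₀ →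
      (inner ℝ x (-(H x) • mulVecE A x + G t x) : ℝ) ≤ -(c₁ * Λ₁ / 2) * ‖x‖ ^ (2 - α) := by
    intro t ht x hx hxle
    have hxn : (0:ℝ) < ‖x‖ := norm_pos_iff.mpr hx
    have hnn : (0:ℝ) ≤ ‖x‖ := hxn.le
    have hrw : ∀ a b : ℝ, ‖x‖ ^ (a : ℝ) * ‖x‖ ^ (b : ℝ) = ‖x‖ ^ (a + b) :=
      fun a b => (Real.rpow_add hxn a b).symm
    have hsq : (‖x‖ : ℝ) ^ (2:ℕ) = ‖x‖ ^ ((2:ℕ) : ℝ) := (Real.rpow_natCast _ 2).symm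
    -- first term
    have hH := hHlow x hx
    have hA := hcoer x
    have hAx : (0:ℝ) ≤ (inner ℝ x (mulVecE A x) : ℝ) := le_trans (by positivity) hA
    have h1 : c₁ * ‖x‖ ^ (-α) * (Λ₁ * ‖x‖ ^ 2) ≤ H x * (inner ℝ x (mulVecE A x) : ℝ) := by
      have hH0 : (0:ℝ) ≤ c₁ * ‖x‖ ^ (-α) := by positivity
      exact mul_le_mul hH hA (by positivity) (le_trans hH0 hH)
    have hsq' : (‖x‖ : ℝ) ^ (2:ℕ) = ‖x‖ ^ ((2:ℝ)) := by
      rw [← Real.rpow_natCast ‖x‖ 2]; norm_num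
    have h1' : c₁ * ‖x‖ ^ (-α) * (Λ₁ * ‖x‖ ^ 2) = c₁ * Λ₁ * ‖x‖ ^ (2 - α) := by
      rw [hsq', show (2:ℝ) - α = -α + 2 by ring, ← hrw (-α) 2]; ring
    -- second term
    have hGb := hG t ht x hx (hxle.trans hr₀2)
    have h2 : (inner ℝ x (G t x) : ℝ) ≤ (c₁ * Λ₁ / 2) * ‖x‖ ^ (2 - α) := by
      have := real_inner_le_norm x (G t x)
      have h2a : (inner ℝ x (G t x) : ℝ) ≤ ‖x‖ * (cs * ‖x‖ ^ (1 - α + δ)) := by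
        calc (inner ℝ x (G t x) : ℝ) ≤ ‖x‖ * ‖G t x‖ := real_inner_le_norm _ _
          _ ≤ ‖x‖ * (cs * ‖x‖ ^ (1 - α + δ)) := by
              apply mul_le_mul_of_nonneg_left hGb hnn
      have h2b : ‖x‖ * (cs * ‖x‖ ^ (1 - α + δ)) = (cs * ‖x‖ ^ δ) * ‖x‖ ^ (2 - α) := by
        have e1 : ‖x‖ ^ (δ:ℝ) * ‖x‖ ^ (2 - α) = ‖x‖ ^ (1:ℝ) * ‖x‖ ^ (1 - α + δ) := by
          rw [hrw, hrw]; congr 1; ring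
        calc ‖x‖ * (cs * ‖x‖ ^ (1 - α + δ)) = cs * (‖x‖ ^ (1:ℝ) * ‖x‖ ^ (1 - α + δ)) := by
              rw [Real.rpow_one]; ring
          _ = cs * (‖x‖ ^ (δ:ℝ) * ‖x‖ ^ (2 - α)) := by rw [e1]
          _ = (cs * ‖x‖ ^ δ) * ‖x‖ ^ (2 - α) := by ring
      have h2c : cs * ‖x‖ ^ δ ≤ c₁ * Λ₁ / 2 := by
        calc cs * ‖x‖ ^ δ ≤ cs * (2 * r₀) ^ δ := by
              apply mul_le_mul_of_nonneg_left _ hcs.le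
              exact Real.rpow_le_rpow hnn hxle hδ.le
          _ ≤ c₁ * Λ₁ / 2 := hr₀1
      have hpow : (0:ℝ) ≤ ‖x‖ ^ (2 - α) := (Real.rpow_pos_of_pos hxn _).le
      calc (inner ℝ x (G t x) : ℝ) ≤ (cs * ‖x‖ ^ δ) * ‖x‖ ^ (2 - α) := by rw [← h2b]; exact h2a
        _ ≤ (c₁ * Λ₁ / 2) * ‖x‖ ^ (2 - α) := mul_le_mul_of_nonneg_right h2c hpow
    rw [inner_add_right, real_inner_smul_right]
    have h1'' : c₁ * Λ₁ * ‖x‖ ^ (2 - α) ≤ H x * (inner ℝ x (mulVecE A x) : ℝ) := h1' ▸ h1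
    linarith
  -- derivative of ‖y t‖ ^ α
  have hD : ∀ t ∈ interior I, ‖y t‖ ≤ 2 * r₀ →
      ∃ d, d ≤ -m ∧ HasDerivAt (fun s => ‖y s‖ ^ α) d t := by
    intro t ht hle
    have htI : t ∈ I := interior_subset ht
    have hx : y t ≠ 0 := hyne t htI
    have hxn : (0:ℝ) < ‖y t‖ := norm_pos_iff.mpr hx
    set v := -(H (y t)) • mulVecE A (y t) + G t (y t) with hv_def
    have hv : HasDerivAt y v t := hyderiv t ht
    have hinner : HasDerivAt (fun s => (inner ℝ (y s) (y s) : ℝ))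
        ((inner ℝ (y t) v : ℝ) + (inner ℝ v (y t) : ℝ)) t := hv.inner ℝ hv
    have hrpos : (0:ℝ) < (inner ℝ (y t) (y t) : ℝ) := by
      rw [real_inner_self_eq_norm_sq]; positivity
    have hpow := hinner.rpow_const (p := α / 2) (Or.inl hrpos.ne')
    have heq : (fun s => (inner ℝ (y s) (y s) : ℝ) ^ (α / 2)) = (fun s => ‖y s‖ ^ α) := by
      funext s
      rw [real_inner_self_eq_norm_sq, ← Real.rpow_natCast ‖y s‖ 2,
        ← Real.rpow_mul (norm_nonneg _)]
      norm_num
      congr 1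
      ring
    rw [heq] at hpow
    refine ⟨_, ?_, hpow⟩
    -- bound the derivative value
    have hsym : (inner ℝ v (y t) : ℝ) = (inner ℝ (y t) v : ℝ) := real_inner_comm _ _
    have hib : (inner ℝ (y t) v : ℝ) ≤ -(c₁ * Λ₁ / 2) * ‖y t‖ ^ (2 - α) :=
      hkey t (hsubI htI) (y t) hx hle
    have hbase : (inner ℝ (y t) (y t) : ℝ) ^ (α / 2 - 1) = ‖y t‖ ^ (α - 2) := by
      rw [real_inner_self_eq_norm_sq, ← Real.rpow_natCast ‖y t‖ 2,
        ← Real.rpow_mul (norm_nonneg _)]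
      norm_num
      congr 1
      ring
    have hpb : (0:ℝ) < ‖y t‖ ^ (α - 2) := Real.rpow_pos_of_pos hxn _
    have hcomb : ‖y t‖ ^ (2 - α) * ‖y t‖ ^ (α - 2) = 1 := by
      rw [← Real.rpow_add hxn]
      norm_num
    calc ((inner ℝ (y t) v : ℝ) + (inner ℝ v (y t) : ℝ)) * (α / 2) *
          (inner ℝ (y t) (y t) : ℝ) ^ (α / 2 - 1)
        = α * (inner ℝ (y t) v : ℝ) * ‖y t‖ ^ (α - 2) := by
          rw [hsym, hbase]; ring
      _ ≤ α * (-(c₁ * Λ₁ / 2) * ‖y t‖ ^ (2 - α)) * ‖y t‖ ^ (α - 2) := by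
          apply mul_le_mul_of_nonneg_right _ hpb.le
          exact mul_le_mul_of_nonneg_left hib hα.le
      _ = -m * (‖y t‖ ^ (2 - α) * ‖y t‖ ^ (α - 2)) := by rw [hm_def]; ring
      _ = -m := by rw [hcomb, mul_one]
  -- main monotonicity step
  have main : ∀ t ∈ I, (∀ s ∈ Icc t₀ t, ‖y s‖ ≤ 2 * r₀) →
      ‖y t‖ ^ α + m * (t - t₀) ≤ ‖y t₀‖ ^ α := by
    intro t ht hb
    have htt : t₀ ≤ t := hsubI ht
    set g : ℝ → ℝ := fun s => ‖y s‖ ^ α + m * s with hg_def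
    have hgc : ContinuousOn g (Icc t₀ t) := by
      apply ContinuousOn.add
      · exact ((hycont.mono (hIccI t ht)).norm).rpow_const (fun s hs => Or.inr hα.le)
      · exact (continuous_const.mul continuous_id).continuousOn
    have hder : ∀ s ∈ interior (Icc t₀ t), ∃ d, d ≤ -m ∧ HasDerivAt g (d + m) s := by
      intro s hs
      rw [interior_Icc] at hs
      have hsint : s ∈ interior I := hIooI t ht hs
      have hsle : ‖y s‖ ≤ 2 * r₀ := hb s ⟨hs.1.le, hs.2.le⟩
      obtain ⟨d, hd, hdd⟩ := hD s hsint hsle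
      refine ⟨d, hd, ?_⟩
      have : HasDerivAt (fun u : ℝ => m * u) m s := by
        simpa using (hasDerivAt_id s).const_mul m
      exact hdd.add this
    have hanti : AntitoneOn g (Icc t₀ t) := by
      apply antitoneOn_of_deriv_nonpos (convex_Icc t₀ t) hgc
      · intro s hs
        obtain ⟨d, hd, hdd⟩ := hder s hs
        exact hdd.differentiableAt.differentiableWithinAt
      · intro s hs
        obtain ⟨d, hd, hdd⟩ := hder s hs
        rw [hdd.deriv]
        linarith
    have := hanti (left_mem_Icc.mpr htt) (right_mem_Icc.mpr htt) htt
    simp only [hg_def] at this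
    linarith
  -- bootstrap: the solution stays in the ball of radius 2 r₀
  have hlt : ∀ t ∈ I, ‖y t‖ < 2 * r₀ := by
    by_contra hcon
    push_neg at hcon
    obtain ⟨b, hbI, hb⟩ := hcon
    set B : Set ℝ := Icc t₀ b ∩ (fun s => ‖y s‖) ⁻¹' Ici (2 * r₀) with hB_def
    have hbt : t₀ ≤ b := hsubI hbI
    have hBne : B.Nonempty := ⟨b, ⟨⟨hbt, le_rfl⟩, hb⟩⟩
    have hBbdd : BddBelow B := ⟨t₀, fun s hs => hs.1.1⟩
    have hBclosed : IsClosed B := by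
      apply ContinuousOn.preimage_isClosed_of_isClosed
        ((hycont.mono (hIccI b hbI)).norm) isClosed_Icc isClosed_Ici
    set τ := sInf B with hτ_def
    have hτB : τ ∈ B := hBclosed.csInf_mem hBne hBbdd
    have hτI : τ ∈ I := hIccI b hbI hτB.1
    have hτge : 2 * r₀ ≤ ‖y τ‖ := hτB.2
    have hτt₀ : t₀ < τ := by
      rcases lt_or_eq_of_le hτB.1.1 with h | h
      · exact h
      · exfalso; rw [← h] at hτge; linarith
    have hsmall : ∀ s ∈ Icc t₀ τ, ‖y s‖ ≤ 2 * r₀ := by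
      have hlt' : ∀ s ∈ Ico t₀ τ, ‖y s‖ < 2 * r₀ := by
        intro s hs
        by_contra hge
        push_neg at hge
        have hsB : s ∈ B := ⟨⟨hs.1, hs.2.le.trans hτB.1.2⟩, hge⟩
        exact absurd (csInf_le hBbdd hsB) (not_le.mpr hs.2)
      intro s hs
      have hτle : ‖y τ‖ ≤ 2 * r₀ := by
        have hcw : ContinuousWithinAt (fun u => ‖y u‖) (Icc t₀ τ) τ :=
          ((hycont.mono (hIccI τ hτI)).norm) τ (right_mem_Icc.mpr hτt₀.le)
        have hne2 : (𝓝[Ico t₀ τ] τ).NeBot := by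
          apply mem_closure_iff_nhdsWithin_neBot.mp
          rw [closure_Ico hτt₀.ne]
          exact right_mem_Icc.mpr hτt₀.le
        have htend : Tendsto (fun u => ‖y u‖) (𝓝[Ico t₀ τ] τ) (𝓝 ‖y τ‖) :=
          hcw.tendsto.mono_left (nhdsWithin_mono τ Ico_subset_Icc_self)
        apply le_of_tendsto htend
        filter_upwards [self_mem_nhdsWithin] with u hu
        exact (hlt' u hu).le
      rcases lt_or_eq_of_le hs.2 with h | h
      · exact (hlt' s ⟨hs.1, h⟩).le
      · rw [h]; exact hτle
    have hineq := main τ hτI hsmall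
    have h0 : ‖y t₀‖ ^ α ≤ r₀ ^ α := Real.rpow_le_rpow (norm_nonneg _) hy0 hα.le
    have h1 : (2 * r₀) ^ α ≤ ‖y τ‖ ^ α := Real.rpow_le_rpow (by positivity) hτge hα.le
    have h2 : r₀ ^ α < (2 * r₀) ^ α := Real.rpow_lt_rpow hr₀pos.le (by linarith) hα
    have h3 : 0 ≤ m * (τ - t₀) := by
      apply mul_nonneg hm.le; linarith
    linarith
  intro t ht
  refine ⟨hlt t ht, ?_⟩
  have := main t ht (fun s hs => (hlt s (hIccI t ht hs)).le)
  have hmm : m = α * (c₁ * Λ₁ / 2) := hm_def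
  linarith
end
end

section
/- There exist positive constants C₁ and C₂ such that C₁(T* − t)^{1/α} ≤ |y(t)| ≤ C₂(T* − t)^{1/α} for all t ∈ [t₀, T*). -/
open Set Real Filter Topology MeasureTheory

noncomputable section

local notation "⟪" x ", " y "⟫ℝ" => @inner ℝ _ _ x y

lemma aux_comparison (ψ : ℝ → ℝ) (t₁ T' cℓ cu : ℝ)
    (hder : ∀ t ∈ Ioo t₁ T', ∃ d, HasDerivAt ψ d t ∧ -cu ≤ d ∧ d ≤ -cℓ)
    (hlim : Tendsto ψ (𝓝[<] T') (𝓝 0)) :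
    ∀ t ∈ Ioo t₁ T', cℓ * (T' - t) ≤ ψ t ∧ ψ t ≤ cu * (T' - t) := by
  intro t ht
  have hcont : ContinuousOn ψ (Ioo t₁ T') := by
    intro s hs
    exact ((hder s hs).choose_spec.1.continuousAt).continuousWithinAt
  have hdiff : ∀ s ∈ Ioo t₁ T', DifferentiableAt ℝ ψ s := fun s hs =>
    ((hder s hs).choose_spec.1).differentiableAt
  have hmemev : ∀ᶠ s in 𝓝[<] T', s ∈ Ioo t T' := by
    have : Ioo t T' ∈ 𝓝[<] T' := Ioo_mem_nhdsLT_of_mem ⟨ht.2, le_refl _⟩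
    exact this
  constructor
  · -- lower bound: g = ψ + cℓ * id antitone
    have hanti : AntitoneOn (fun s => ψ s + cℓ * s) (Ioo t₁ T') := by
      apply antitoneOn_of_deriv_nonpos (convex_Ioo t₁ T')
      · exact hcont.add (continuous_const.mul continuous_id).continuousOn
      · rw [interior_Ioo]
        intro s hs
        exact ((hdiff s hs).add ((differentiable_id.const_mul cℓ) s)).differentiableWithinAt
      · rw [interior_Ioo]
        intro s hs
        obtain ⟨d, hd, _, hd2⟩ := hder s hs
        have : HasDerivAt (fun s => ψ s + cℓ * s) (d + cℓ) s :=
          hd.add ((hasDerivAt_id s).const_mul cℓ |>.congr_deriv (by ring))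
        rw [this.deriv]; linarith
    have hev : ∀ᶠ s in 𝓝[<] T', ψ s + cℓ * s ≤ ψ t + cℓ * t := by
      filter_upwards [hmemev] with s hs
      exact hanti ht ⟨lt_trans ht.1 hs.1, hs.2⟩ (le_of_lt hs.1)
    have htend : Tendsto (fun s => ψ s + cℓ * s) (𝓝[<] T') (𝓝 (0 + cℓ * T')) :=
      hlim.add (((continuous_const.mul continuous_id).tendsto T').mono_left nhdsWithin_le_nhds)
    have := le_of_tendsto htend hev
    linarith
  · have hmono : MonotoneOn (fun s => ψ s + cu * s) (Ioo t₁ T') := by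
      apply monotoneOn_of_deriv_nonneg (convex_Ioo t₁ T')
      · exact hcont.add (continuous_const.mul continuous_id).continuousOn
      · rw [interior_Ioo]
        intro s hs
        exact ((hdiff s hs).add ((differentiable_id.const_mul cu) s)).differentiableWithinAt
      · rw [interior_Ioo]
        intro s hs
        obtain ⟨d, hd, hd1, _⟩ := hder s hs
        have : HasDerivAt (fun s => ψ s + cu * s) (d + cu) s :=
          hd.add ((hasDerivAt_id s).const_mul cu |>.congr_deriv (by ring))
        rw [this.deriv]; linarith
    have hev : ∀ᶠ s in 𝓝[<] T', ψ t + cu * t ≤ ψ s + cu * s := by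
      filter_upwards [hmemev] with s hs
      exact hmono ht ⟨lt_trans ht.1 hs.1, hs.2⟩ (le_of_lt hs.1)
    have htend : Tendsto (fun s => ψ s + cu * s) (𝓝[<] T') (𝓝 (0 + cu * T')) :=
      hlim.add (((continuous_const.mul continuous_id).tendsto T').mono_left nhdsWithin_le_nhds)
    have := ge_of_tendsto htend hev
    linarith

noncomputable def mulVecCLM {n : ℕ} (A : Matrix (Fin n) (Fin n) ℝ) :
    EuclideanSpace ℝ (Fin n) →L[ℝ] EuclideanSpace ℝ (Fin n) :=
  LinearMap.toContinuousLinearMap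
    { toFun := fun x => mulVecE A x
      map_add' := fun x y => by unfold mulVecE; simp [Matrix.mulVec_add]
      map_smul' := fun c x => by unfold mulVecE; simp [Matrix.mulVec_smul] }

lemma mulVecCLM_apply {n : ℕ} (A : Matrix (Fin n) (Fin n) ℝ) (x : EuclideanSpace ℝ (Fin n)) :
    mulVecCLM A x = mulVecE A x := rfl

lemma aux_norm_bound {n : ℕ} (A : Matrix (Fin n) (Fin n) ℝ) :
    ∃ K : ℝ, 0 < K ∧ ∀ x : EuclideanSpace ℝ (Fin n), ‖mulVecE A x‖ ≤ K * ‖x‖ := by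
  refine ⟨‖mulVecCLM A‖ + 1, by positivity, fun x => ?_⟩
  calc ‖mulVecE A x‖ = ‖mulVecCLM A x‖ := rfl
    _ ≤ ‖mulVecCLM A‖ * ‖x‖ := (mulVecCLM A).le_opNorm x
    _ ≤ (‖mulVecCLM A‖ + 1) * ‖x‖ := by nlinarith [norm_nonneg x, norm_nonneg (mulVecCLM A)]

lemma aux_H_bounds {n : ℕ} (hn : 1 ≤ n) (α : ℝ)
    (H : EuclideanSpace ℝ (Fin n) → ℝ)
    (hHhom : ∀ x : EuclideanSpace ℝ (Fin n), x ≠ 0 → ∀ s : ℝ, 0 < s →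
      H (s • x) = s ^ (-α) * H x)
    (hHpos : ∀ x : EuclideanSpace ℝ (Fin n), ‖x‖ = 1 → 0 < H x)
    (hHcont : ContinuousOn H (Metric.sphere (0 : EuclideanSpace ℝ (Fin n)) 1)) :
    ∃ h₁ h₂ : ℝ, 0 < h₁ ∧ 0 < h₂ ∧ ∀ x : EuclideanSpace ℝ (Fin n), x ≠ 0 →
      h₁ * ‖x‖ ^ (-α) ≤ H x ∧ H x ≤ h₂ * ‖x‖ ^ (-α) := by
  haveI : Nontrivial (EuclideanSpace ℝ (Fin n)) := by
    refine ⟨EuclideanSpace.single ⟨0, hn⟩ 1, 0, ?_⟩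
    intro h
    have := congrArg (fun v => v ⟨0, hn⟩) h
    simp [EuclideanSpace.single] at this
  have hsph : (Metric.sphere (0 : EuclideanSpace ℝ (Fin n)) 1).Nonempty :=
    NormedSpace.sphere_nonempty.mpr (by norm_num)
  have hcs : IsCompact (Metric.sphere (0 : EuclideanSpace ℝ (Fin n)) 1) := isCompact_sphere 0 1
  obtain ⟨u, hu, humin'⟩ := hcs.exists_isMinOn hsph hHcont
  have humin := isMinOn_iff.mp humin'
  obtain ⟨v, hv, hvmax'⟩ := hcs.exists_isMaxOn hsph hHcont
  have hvmax := isMaxOn_iff.mp hvmax'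
  have hun : ‖u‖ = 1 := by simpa using mem_sphere_zero_iff_norm.mp hu
  have hvn : ‖v‖ = 1 := by simpa using mem_sphere_zero_iff_norm.mp hv
  refine ⟨H u, H v, hHpos u hun, hHpos v hvn, fun x hx => ?_⟩
  have hnx : 0 < ‖x‖ := norm_pos_iff.mpr hx
  set w : EuclideanSpace ℝ (Fin n) := ‖x‖⁻¹ • x with hw
  have hwn : ‖w‖ = 1 := by
    rw [hw, norm_smul, norm_inv, norm_norm, inv_mul_cancel₀ hnx.ne']
  have hwne : w ≠ 0 := by
    intro h; rw [h] at hwn; simp at hwn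
  have hxw : x = ‖x‖ • w := by
    rw [hw, smul_smul, mul_inv_cancel₀ hnx.ne', one_smul]
  have hHx : H x = ‖x‖ ^ (-α) * H w := by
    conv_lhs => rw [hxw]
    rw [hHhom w hwne ‖x‖ hnx]
  have hwm : w ∈ Metric.sphere (0 : EuclideanSpace ℝ (Fin n)) 1 :=
    mem_sphere_zero_iff_norm.mpr hwn
  have hpow : (0:ℝ) < ‖x‖ ^ (-α) := Real.rpow_pos_of_pos hnx _
  constructor
  · rw [hHx, mul_comm (H u)]
    exact mul_le_mul_of_nonneg_left (humin w hwm) hpow.le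
  · rw [hHx, mul_comm (H v)]
    exact mul_le_mul_of_nonneg_left (hvmax w hwm) hpow.le

set_option maxHeartbeats 2000000 in
theorem solution_two_sided_power_rate (n : ℕ) (hn : 1 ≤ n)
    (α δ M t₀ T' : ℝ) (hα : 0 < α) (hδ : 0 < δ) (hM : 0 < M)
    (ht₀ : 0 ≤ t₀) (hT' : t₀ < T')
    (A : Matrix (Fin n) (Fin n) ℝ)
    (hA : ∃ S D : Matrix (Fin n) (Fin n) ℝ, IsUnit S ∧ D.IsDiag ∧
      (∀ i, 0 < D i i) ∧ A = S⁻¹ * D * S)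
    (H : EuclideanSpace ℝ (Fin n) → ℝ)
    (hHhom : ∀ x : EuclideanSpace ℝ (Fin n), x ≠ 0 → ∀ s : ℝ, 0 < s →
      H (s • x) = s ^ (-α) * H x)
    (hHpos : ∀ x : EuclideanSpace ℝ (Fin n), ‖x‖ = 1 → 0 < H x)
    (hHcont : ContinuousOn H (Metric.sphere (0 : EuclideanSpace ℝ (Fin n)) 1))
    (y f : ℝ → EuclideanSpace ℝ (Fin n))
    (hycont : ContinuousOn y (Ico t₀ T'))
    (hyne : ∀ t ∈ Ico t₀ T', y t ≠ 0)
    (hylim : Tendsto y (𝓝[<] T') (𝓝 0))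
    (hode : ∀ t ∈ Ioo t₀ T', HasDerivAt y (-(H (y t)) • mulVecE A (y t) + f t) t)
    (hfcont : ContinuousOn f (Ico t₀ T'))
    (hfb : ∀ t ∈ Ico t₀ T', ‖f t‖ ≤ M * ‖y t‖ ^ (1 - α + δ))
    :
    ∃ C₁ C₂ : ℝ, 0 < C₁ ∧ 0 < C₂ ∧
      ∀ t ∈ Ico t₀ T',
        C₁ * (T' - t) ^ (1 / α) ≤ ‖y t‖ ∧ ‖y t‖ ≤ C₂ * (T' - t) ^ (1 / α) := by
  classical
  obtain ⟨S, D, hSu, hDdiag, hDpos, hAeq⟩ := hA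
  haveI : Nonempty (Fin n) := ⟨⟨0, hn⟩⟩
  have hdet : IsUnit S.det := (Matrix.isUnit_iff_isUnit_det S).mp hSu
  have hSS : S⁻¹ * S = 1 := Matrix.nonsing_inv_mul S hdet
  have hSS' : S * S⁻¹ = 1 := Matrix.mul_nonsing_inv S hdet
  obtain ⟨Ks, hKs, hKsb⟩ := aux_norm_bound S
  obtain ⟨Ki, hKi, hKib⟩ := aux_norm_bound S⁻¹
  obtain ⟨h₁, h₂, hh₁, hh₂, hHb⟩ := aux_H_bounds hn α H hHhom hHpos hHcont
  -- eigenvalue bounds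
  set lam : ℝ := Finset.univ.inf' Finset.univ_nonempty (fun i => D i i) with hlam_def
  set Lam : ℝ := Finset.univ.sup' Finset.univ_nonempty (fun i => D i i) with hLam_def
  have hlam_pos : 0 < lam := by
    rw [hlam_def, Finset.lt_inf'_iff]
    exact fun i _ => hDpos i
  have hlam_le : ∀ i, lam ≤ D i i := fun i => Finset.inf'_le _ (Finset.mem_univ i)
  have hLam_ge : ∀ i, D i i ≤ Lam := fun i => Finset.le_sup' (fun j => D j j) (Finset.mem_univ i)
  have hLam_pos : 0 < Lam := lt_of_lt_of_le hlam_pos ((hlam_le (Classical.arbitrary _)).trans (hLam_ge _))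
  -- the transformed solution z = S y
  set z : ℝ → EuclideanSpace ℝ (Fin n) := fun t => mulVecE S (y t) with hz_def
  have hzy : ∀ t, mulVecE S⁻¹ (z t) = y t := by
    intro t
    show WithLp.toLp 2 (S⁻¹.mulVec (S.mulVec (y t).ofLp)) = y t
    rw [Matrix.mulVec_mulVec, hSS, Matrix.one_mulVec]
  have hyz_le : ∀ t, ‖y t‖ ≤ Ki * ‖z t‖ := fun t => by
    conv_lhs => rw [← hzy t]
    exact hKib (z t)
  have hzy_le : ∀ t, ‖z t‖ ≤ Ks * ‖y t‖ := fun t => hKsb (y t)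
  have hzpos : ∀ t ∈ Ico t₀ T', 0 < ‖z t‖ := by
    intro t ht
    have : z t ≠ 0 := by
      intro h
      apply hyne t ht
      rw [← hzy t, h]
      unfold mulVecE
      simp [Matrix.mulVec_zero]
    exact norm_pos_iff.mpr this
  have hypos : ∀ t ∈ Ico t₀ T', 0 < ‖y t‖ := fun t ht => norm_pos_iff.mpr (hyne t ht)
  -- derivative of z
  have hSA : ∀ x : EuclideanSpace ℝ (Fin n), mulVecE S (mulVecE A x) = mulVecE D (mulVecE S x) := by
    intro x
    show WithLp.toLp 2 (S.mulVec (A.mulVec x.ofLp)) = WithLp.toLp 2 (D.mulVec (S.mulVec x.ofLp))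
    rw [Matrix.mulVec_mulVec, Matrix.mulVec_mulVec, hAeq, ← Matrix.mul_assoc,
      ← Matrix.mul_assoc, hSS', Matrix.one_mul]
  have hzder : ∀ t ∈ Ioo t₀ T',
      HasDerivAt z (-(H (y t)) • mulVecE D (z t) + mulVecE S (f t)) t := by
    intro t ht
    have h1 := (mulVecCLM S).hasFDerivAt.comp_hasDerivAt t (hode t ht)
    have h2 : mulVecCLM S (-(H (y t)) • mulVecE A (y t) + f t)
        = -(H (y t)) • mulVecE D (z t) + mulVecE S (f t) := by
      rw [_root_.map_add, _root_.map_smul, mulVecCLM_apply, mulVecCLM_apply, hSA]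
    rw [h2] at h1
    exact h1
  -- quadratic form bounds for D
  have hDq : ∀ x : EuclideanSpace ℝ (Fin n),
      lam * ‖x‖ ^ 2 ≤ ⟪mulVecE D x, x⟫ℝ ∧ ⟪mulVecE D x, x⟫ℝ ≤ Lam * ‖x‖ ^ 2 := by
    intro x
    have hmv : ∀ i, (mulVecE D x) i = D i i * x i := by
      intro i
      show (D.mulVec x.ofLp) i = D i i * x.ofLp i
      simp only [Matrix.mulVec, dotProduct]
      rw [Finset.sum_eq_single i]
      · intro j _ hj
        rw [hDdiag (Ne.symm hj), zero_mul]
      · intro h; exact absurd (Finset.mem_univ i) h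
    have hinner : ⟪mulVecE D x, x⟫ℝ = ∑ i, D i i * (x i * x i) := by
      rw [PiLp.inner_apply]
      exact Finset.sum_congr rfl fun i _ => by
        rw [RCLike.inner_apply, conj_trivial, hmv, mul_left_comm]
    have hns : (‖x‖ : ℝ) ^ 2 = ∑ i, x i * x i := by
      rw [← real_inner_self_eq_norm_sq, PiLp.inner_apply]
      exact Finset.sum_congr rfl fun i _ => by rw [RCLike.inner_apply, conj_trivial]
    constructor
    · rw [hinner, hns, Finset.mul_sum]
      apply Finset.sum_le_sum
      intro i _
      exact mul_le_mul_of_nonneg_right (hlam_le i) (mul_self_nonneg _)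
    · rw [hinner, hns, Finset.mul_sum]
      apply Finset.sum_le_sum
      intro i _
      exact mul_le_mul_of_nonneg_right (hLam_ge i) (mul_self_nonneg _)
  -- constants
  set β : ℝ := 1 - α + δ with hβ_def
  set a₀ : ℝ := h₁ * Ki ^ (-α) * lam with ha₀_def
  set b₀ : ℝ := h₂ * Ks ^ α * Lam with hb₀_def
  set Cβ : ℝ := max (Ki ^ β) (Ks ^ (-β)) with hCβ_def
  set B₀ : ℝ := Ks * M * Cβ with hB₀_def
  have ha₀ : 0 < a₀ := by
    have := Real.rpow_pos_of_pos hKi (-α)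
    positivity
  have hb₀ : 0 < b₀ := by
    have := Real.rpow_pos_of_pos hKs α
    positivity
  have hCβ : 0 < Cβ := lt_max_of_lt_left (Real.rpow_pos_of_pos hKi β)
  have hB₀ : 0 < B₀ := by positivity
  -- pointwise estimates
  have hr2 : ∀ r : ℝ, 0 ≤ r → r ^ ((2:ℝ)) = r ^ (2:ℕ) := by
    intro r hr
    rw [← Real.rpow_natCast r 2]
    norm_num
  have hE1 : ∀ t ∈ Ico t₀ T',
      a₀ * ‖z t‖ ^ ((2:ℝ) - α) ≤ H (y t) * ⟪mulVecE D (z t), z t⟫ℝ := by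
    intro t ht
    have hr := hzpos t ht
    have hyp := hypos t ht
    have hH := (hHb (y t) (hyne t ht)).1
    have hQ := (hDq (z t)).1
    have hQ0 : 0 < lam * ‖z t‖ ^ 2 := by positivity
    have hyα : (Ki * ‖z t‖) ^ (-α) ≤ ‖y t‖ ^ (-α) :=
      Real.rpow_le_rpow_of_nonpos hyp (hyz_le t) (neg_nonpos.mpr hα.le)
    have hsplit : (Ki * ‖z t‖) ^ (-α) = Ki ^ (-α) * ‖z t‖ ^ (-α) :=
      Real.mul_rpow hKi.le hr.le
    have hchain : a₀ * ‖z t‖ ^ ((2:ℝ) - α) = (h₁ * (Ki ^ (-α) * ‖z t‖ ^ (-α))) * (lam * ‖z t‖ ^ 2) := by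
      rw [ha₀_def]
      have : ‖z t‖ ^ ((2:ℝ) - α) = ‖z t‖ ^ (-α) * ‖z t‖ ^ ((2:ℝ)) := by
        rw [← Real.rpow_add hr]; ring_nf
      rw [this, hr2 _ hr.le]; ring
    rw [hchain]
    apply mul_le_mul
    · rw [← hsplit]
      exact le_trans (mul_le_mul_of_nonneg_left hyα hh₁.le) hH
    · exact hQ
    · exact hQ0.le
    · exact lt_of_lt_of_le (mul_pos hh₁ (Real.rpow_pos_of_pos hyp _)) hH |>.le
  have hE2 : ∀ t ∈ Ico t₀ T',
      H (y t) * ⟪mulVecE D (z t), z t⟫ℝ ≤ b₀ * ‖z t‖ ^ ((2:ℝ) - α) := by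
    intro t ht
    have hr := hzpos t ht
    have hyp := hypos t ht
    have hH := (hHb (y t) (hyne t ht)).2
    have hQ := (hDq (z t)).2
    have hQ0 : 0 ≤ ⟪mulVecE D (z t), z t⟫ℝ :=
      le_trans (by positivity) (hDq (z t)).1
    have hdiv : 0 < ‖z t‖ / Ks := div_pos hr hKs
    have hyle : ‖z t‖ / Ks ≤ ‖y t‖ := (div_le_iff₀ hKs).mpr (by linarith [hzy_le t])
    have hyα : ‖y t‖ ^ (-α) ≤ (‖z t‖ / Ks) ^ (-α) :=
      Real.rpow_le_rpow_of_nonpos hdiv hyle (neg_nonpos.mpr hα.le)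
    have hsplit : (‖z t‖ / Ks) ^ (-α) = ‖z t‖ ^ (-α) * Ks ^ α := by
      rw [Real.div_rpow hr.le hKs.le, Real.rpow_neg hKs.le α]
      field_simp
    have hHle : H (y t) ≤ h₂ * (‖z t‖ ^ (-α) * Ks ^ α) := by
      rw [← hsplit]
      exact le_trans hH (mul_le_mul_of_nonneg_left hyα hh₂.le)
    have hH0 : 0 ≤ H (y t) :=
      le_trans (mul_pos hh₁ (Real.rpow_pos_of_pos hyp _)).le (hHb (y t) (hyne t ht)).1
    have hchain : b₀ * ‖z t‖ ^ ((2:ℝ) - α) = (h₂ * (‖z t‖ ^ (-α) * Ks ^ α)) * (Lam * ‖z t‖ ^ 2) := by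
      rw [hb₀_def]
      have : ‖z t‖ ^ ((2:ℝ) - α) = ‖z t‖ ^ (-α) * ‖z t‖ ^ ((2:ℝ)) := by
        rw [← Real.rpow_add hr]; ring_nf
      rw [this, hr2 _ hr.le]; ring
    rw [hchain]
    apply mul_le_mul hHle hQ hQ0
    have := Real.rpow_pos_of_pos hr (-α)
    have := Real.rpow_pos_of_pos hKs α
    positivity
  have hE3 : ∀ t ∈ Ico t₀ T',
      |⟪mulVecE S (f t), z t⟫ℝ| ≤ B₀ * ‖z t‖ ^ ((2:ℝ) - α + δ) := by
    intro t ht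
    have hr := hzpos t ht
    have hyp := hypos t ht
    have hyβ : ‖y t‖ ^ β ≤ Cβ * ‖z t‖ ^ β := by
      rcases le_or_gt 0 β with hβ | hβ
      · calc ‖y t‖ ^ β ≤ (Ki * ‖z t‖) ^ β :=
              Real.rpow_le_rpow (norm_nonneg _) (hyz_le t) hβ
          _ = Ki ^ β * ‖z t‖ ^ β := Real.mul_rpow hKi.le hr.le
          _ ≤ Cβ * ‖z t‖ ^ β := by
              apply mul_le_mul_of_nonneg_right (le_max_left _ _)
              positivity
      · have hdiv : 0 < ‖z t‖ / Ks := div_pos hr hKs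
        have hyle : ‖z t‖ / Ks ≤ ‖y t‖ := (div_le_iff₀ hKs).mpr (by linarith [hzy_le t])
        calc ‖y t‖ ^ β ≤ (‖z t‖ / Ks) ^ β :=
              Real.rpow_le_rpow_of_nonpos hdiv hyle hβ.le
          _ = Ks ^ (-β) * ‖z t‖ ^ β := by
              rw [Real.div_rpow hr.le hKs.le, Real.rpow_neg hKs.le β, div_eq_mul_inv,
                mul_comm]
          _ ≤ Cβ * ‖z t‖ ^ β := by
              apply mul_le_mul_of_nonneg_right (le_max_right _ _)
              positivity
    have hfn : ‖mulVecE S (f t)‖ ≤ Ks * (M * ‖y t‖ ^ β) :=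
      le_trans (hKsb (f t)) (mul_le_mul_of_nonneg_left (hfb t ht) hKs.le)
    calc |⟪mulVecE S (f t), z t⟫ℝ| ≤ ‖mulVecE S (f t)‖ * ‖z t‖ :=
          abs_real_inner_le_norm _ _
      _ ≤ (Ks * (M * ‖y t‖ ^ β)) * ‖z t‖ :=
          mul_le_mul_of_nonneg_right hfn (norm_nonneg _)
      _ ≤ (Ks * (M * (Cβ * ‖z t‖ ^ β))) * ‖z t‖ := by
          have := mul_le_mul_of_nonneg_left hyβ hM.le
          have := mul_le_mul_of_nonneg_left this hKs.le
          exact mul_le_mul_of_nonneg_right this (norm_nonneg _)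
      _ = B₀ * (‖z t‖ ^ β * ‖z t‖ ^ ((1:ℝ))) := by
          rw [Real.rpow_one, hB₀_def]; ring
      _ = B₀ * ‖z t‖ ^ ((2:ℝ) - α + δ) := by
          rw [← Real.rpow_add hr, hβ_def]; ring_nf
  -- the squared norm and its derivative
  set ρ : ℝ → ℝ := fun s => ⟪z s, z s⟫ℝ with hρ_def
  have hρval : ∀ s, ρ s = ‖z s‖ ^ (2:ℕ) := fun s => real_inner_self_eq_norm_sq (z s)
  have hρder : ∀ t ∈ Ioo t₀ T', HasDerivAt ρ
      (2 * (-(H (y t)) * ⟪mulVecE D (z t), z t⟫ℝ + ⟪mulVecE S (f t), z t⟫ℝ)) t := by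
    intro t ht
    have h1 := HasDerivAt.inner ℝ (hzder t ht) (hzder t ht)
    have he : ⟪-(H (y t)) • mulVecE D (z t) + mulVecE S (f t), z t⟫ℝ
        = -(H (y t)) * ⟪mulVecE D (z t), z t⟫ℝ + ⟪mulVecE S (f t), z t⟫ℝ := by
      rw [inner_add_left, real_inner_smul_left]
    have he2 : ⟪z t, -(H (y t)) • mulVecE D (z t) + mulVecE S (f t)⟫ℝ
        = -(H (y t)) * ⟪mulVecE D (z t), z t⟫ℝ + ⟪mulVecE S (f t), z t⟫ℝ := by
      rw [inner_add_right, real_inner_smul_right, real_inner_comm (z t) (mulVecE D (z t)),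
        real_inner_comm (z t) (mulVecE S (f t))]
    refine h1.congr_deriv ?_
    rw [he, he2]
    ring
  -- smallness threshold
  set ε : ℝ := (a₀ / (2 * B₀)) ^ (1/δ) with hε_def
  have hε : 0 < ε := Real.rpow_pos_of_pos (by positivity) _
  have hεδ : 2 * B₀ * ε ^ δ = a₀ := by
    rw [hε_def, ← Real.rpow_mul (by positivity), one_div, inv_mul_cancel₀ hδ.ne',
      Real.rpow_one]
    field_simp
  have hzlim : Tendsto (fun t => ‖z t‖) (𝓝[<] T') (𝓝 0) := by
    have hzl : Tendsto z (𝓝[<] T') (𝓝 0) := by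
      have := ((mulVecCLM S).continuous.tendsto 0).comp hylim
      simp at this
      exact this
    simpa using hzl.norm
  have hev : ∀ᶠ t in 𝓝[<] T', ‖z t‖ < ε := hzlim.eventually_lt_const hε
  obtain ⟨l, hl, hlsub⟩ := mem_nhdsLT_iff_exists_Ioo_subset.mp hev
  set t₁ : ℝ := max l ((t₀ + T')/2) with ht₁_def
  have ht₁l : t₀ < t₁ := lt_max_of_lt_right (by linarith)
  have ht₁u : t₁ < T' := max_lt hl (by linarith)
  have hsub : Ioo t₁ T' ⊆ Ioo t₀ T' := Ioo_subset_Ioo ht₁l.le le_rfl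
  have hεz : ∀ t ∈ Ioo t₁ T', ‖z t‖ ≤ ε := by
    intro t ht
    exact (hlsub ⟨lt_of_le_of_lt (le_max_left l _) ht.1, ht.2⟩).le
  -- ψ = ρ^(α/2) and its derivative bounds
  set ψ : ℝ → ℝ := fun s => ρ s ^ (α/2) with hψ_def
  set cℓ : ℝ := α/2 * a₀ with hcℓ_def
  set cu : ℝ := α/2 * (2*b₀ + a₀) with hcu_def
  have hcℓ : 0 < cℓ := by positivity
  have hcu : 0 < cu := by positivity
  have hψder : ∀ t ∈ Ioo t₁ T', ∃ d, HasDerivAt ψ d t ∧ -cu ≤ d ∧ d ≤ -cℓ := by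
    intro t ht
    have ht' : t ∈ Ioo t₀ T' := hsub ht
    have ht'' : t ∈ Ico t₀ T' := ⟨ht'.1.le, ht'.2⟩
    have hr := hzpos t ht''
    have hρpos : 0 < ρ t := by rw [hρval]; positivity
    have hd := (hρder t ht').rpow_const (p := α/2) (Or.inl hρpos.ne')
    have h1 := hE1 t ht''
    have h2 := hE2 t ht''
    have h3 := hE3 t ht''
    have hkey : ρ t ^ ((1:ℝ) - α/2) = ‖z t‖ ^ ((2:ℝ) - α) := by
      rw [hρval, ← hr2 _ (norm_nonneg _), ← Real.rpow_mul (norm_nonneg _)]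
      congr 1
      ring
    have hone : ρ t ^ (α/2 - 1) * ρ t ^ ((1:ℝ) - α/2) = 1 := by
      rw [← Real.rpow_add hρpos]
      norm_num
    rw [hkey] at hone
    have hsplit : ‖z t‖ ^ ((2:ℝ) - α + δ) = ‖z t‖ ^ ((2:ℝ) - α) * ‖z t‖ ^ δ :=
      Real.rpow_add hr _ _
    rw [hsplit] at h3
    have hrδ : ‖z t‖ ^ δ ≤ ε ^ δ := Real.rpow_le_rpow hr.le (hεz t ht) hδ.le
    have hHy : 0 < H (y t) :=
      lt_of_lt_of_le (mul_pos hh₁ (Real.rpow_pos_of_pos (hypos t ht'') _)) (hHb _ (hyne t ht'')).1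
    have hXpos : 0 < ‖z t‖ ^ ((2:ℝ) - α) := Real.rpow_pos_of_pos hr _
    have hEpos : 0 < ρ t ^ (α/2 - 1) := Real.rpow_pos_of_pos hρpos _
    -- abstract everything into scalars
    generalize hQg : ⟪mulVecE D (z t), z t⟫ℝ = Q at hd h1 h2
    generalize hPg : ⟪mulVecE S (f t), z t⟫ℝ = P at hd h3
    generalize hXg : ‖z t‖ ^ ((2:ℝ) - α) = X at h1 h2 h3 hone hXpos
    generalize hWg : ‖z t‖ ^ δ = W at h3 hrδ
    generalize hEg : ρ t ^ (α/2 - 1) = E at hd hone hEpos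
    generalize hHg : H (y t) = Hy at hd h1 h2 hHy
    have hWpos : 0 ≤ W := by
      rw [← hWg]
      positivity
    have habs := abs_le.mp h3
    have hax : 2 * (B₀ * X * ε ^ δ) = a₀ * X := by rw [← hεδ]; ring
    have hB₀X : (0:ℝ) ≤ B₀ * X := by positivity
    have hWε : B₀ * X * W ≤ B₀ * X * ε ^ δ := mul_le_mul_of_nonneg_left hrδ hB₀X
    refine ⟨_, hd, ?_, ?_⟩
    · -- lower bound -cu ≤ d
      have hdv : -((2*b₀ + a₀) * X) ≤ 2 * (-Hy * Q + P) := by linarith [h2, habs.1, hWε, hax]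
      calc -cu = -cu * (E * X) := by rw [hone, mul_one]
        _ = (-((2*b₀ + a₀) * X)) * (α/2) * E := by rw [hcu_def]; ring
        _ ≤ 2 * (-Hy * Q + P) * (α/2) * E := by
            have := mul_le_mul_of_nonneg_right
              (mul_le_mul_of_nonneg_right hdv (by positivity : (0:ℝ) ≤ α/2)) hEpos.le
            linarith
    · -- upper bound d ≤ -cℓ
      have hdv : 2 * (-Hy * Q + P) ≤ -(a₀ * X) := by linarith [h1, habs.2, hWε, hax]
      calc 2 * (-Hy * Q + P) * (α/2) * E ≤ (-(a₀ * X)) * (α/2) * E := by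
            have := mul_le_mul_of_nonneg_right
              (mul_le_mul_of_nonneg_right hdv (by positivity : (0:ℝ) ≤ α/2)) hEpos.le
            linarith
        _ = -cℓ * (E * X) := by rw [hcℓ_def]; ring
        _ = -cℓ := by rw [hone, mul_one]
  -- limits
  have hρlim : Tendsto ρ (𝓝[<] T') (𝓝 0) := by
    rw [funext hρval]
    simpa using hzlim.pow 2
  have hψlim : Tendsto ψ (𝓝[<] T') (𝓝 0) := by
    have hc : ContinuousAt (fun x : ℝ => x ^ (α/2)) 0 :=
      Real.continuousAt_rpow_const 0 (α/2) (Or.inr (by positivity))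
    have := hc.tendsto.comp hρlim
    simp [Real.zero_rpow (ne_of_gt (by positivity : (0:ℝ) < α/2))] at this
    exact this
  have hcomp := aux_comparison ψ t₁ T' cℓ cu hψder hψlim
  have hψval : ∀ t, ψ t = ‖z t‖ ^ α := by
    intro t
    show ρ t ^ (α/2) = ‖z t‖ ^ α
    rw [hρval, ← hr2 _ (norm_nonneg _), ← Real.rpow_mul (norm_nonneg _)]
    congr 1
    ring
  -- two-sided bounds near T'
  have hmain : ∀ t ∈ Ioo t₁ T',
      Ks⁻¹ * cℓ ^ (1/α) * (T' - t) ^ (1/α) ≤ ‖y t‖ ∧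
      ‖y t‖ ≤ Ki * cu ^ (1/α) * (T' - t) ^ (1/α) := by
    intro t ht
    have ht'' : t ∈ Ico t₀ T' := ⟨(hsub ht).1.le, ht.2⟩
    obtain ⟨hlo, hhi⟩ := hcomp t ht
    rw [hψval t] at hlo hhi
    have hr := hzpos t ht''
    have hTt : 0 < T' - t := by linarith [ht.2]
    have hzlo : (cℓ * (T' - t)) ^ (1/α) ≤ ‖z t‖ := by
      have h0 := Real.rpow_le_rpow (by positivity) hlo (by positivity : (0:ℝ) ≤ 1/α)
      rwa [← Real.rpow_mul (norm_nonneg _), mul_one_div, div_self hα.ne', Real.rpow_one] at h0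
    have hzhi : ‖z t‖ ≤ (cu * (T' - t)) ^ (1/α) := by
      have h0 := Real.rpow_le_rpow (by positivity) hhi (by positivity : (0:ℝ) ≤ 1/α)
      rwa [← Real.rpow_mul (norm_nonneg _), mul_one_div, div_self hα.ne', Real.rpow_one] at h0
    have hmullo : (cℓ * (T' - t)) ^ (1/α) = cℓ ^ (1/α) * (T' - t) ^ (1/α) :=
      Real.mul_rpow hcℓ.le hTt.le
    have hmulhi : (cu * (T' - t)) ^ (1/α) = cu ^ (1/α) * (T' - t) ^ (1/α) :=
      Real.mul_rpow hcu.le hTt.le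
    constructor
    · have h6 : cℓ ^ (1/α) * (T' - t) ^ (1/α) ≤ Ks * ‖y t‖ := by
        rw [← hmullo]
        exact hzlo.trans (hzy_le t)
      calc Ks⁻¹ * cℓ ^ (1/α) * (T' - t) ^ (1/α)
          = Ks⁻¹ * (cℓ ^ (1/α) * (T' - t) ^ (1/α)) := by ring
        _ ≤ Ks⁻¹ * (Ks * ‖y t‖) := mul_le_mul_of_nonneg_left h6 (by positivity)
        _ = ‖y t‖ := by field_simp
    · calc ‖y t‖ ≤ Ki * ‖z t‖ := hyz_le t
        _ ≤ Ki * ((cu * (T' - t)) ^ (1/α)) := mul_le_mul_of_nonneg_left hzhi hKi.le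
        _ = Ki * cu ^ (1/α) * (T' - t) ^ (1/α) := by rw [hmulhi]; ring
  -- the compact piece
  have hIccsub : Icc t₀ t₁ ⊆ Ico t₀ T' := fun s hs => ⟨hs.1, lt_of_le_of_lt hs.2 ht₁u⟩
  have hyC : ContinuousOn (fun t => ‖y t‖) (Icc t₀ t₁) := (hycont.mono hIccsub).norm
  have hIne : (Icc t₀ t₁).Nonempty := ⟨t₀, le_refl _, ht₁l.le⟩
  obtain ⟨u, hu, humin'⟩ := (isCompact_Icc).exists_isMinOn hIne hyC
  obtain ⟨v, hv, hvmax'⟩ := (isCompact_Icc).exists_isMaxOn hIne hyC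
  have humin := isMinOn_iff.mp humin'
  have hvmax := isMaxOn_iff.mp hvmax'
  have hm : 0 < ‖y u‖ := hypos u (hIccsub hu)
  have hv0 : 0 < ‖y v‖ := hypos v (hIccsub hv)
  have hT₀ : 0 < T' - t₀ := by linarith
  have hT₁ : 0 < T' - t₁ := by linarith
  have hrp₀ : 0 < (T' - t₀) ^ (1/α) := Real.rpow_pos_of_pos hT₀ _
  have hrp₁ : 0 < (T' - t₁) ^ (1/α) := Real.rpow_pos_of_pos hT₁ _
  set C₁' : ℝ := Ks⁻¹ * cℓ ^ (1/α) with hC₁'_def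
  set C₂' : ℝ := Ki * cu ^ (1/α) with hC₂'_def
  set C₁'' : ℝ := ‖y u‖ / (T' - t₀) ^ (1/α) with hC₁''_def
  set C₂'' : ℝ := ‖y v‖ / (T' - t₁) ^ (1/α) with hC₂''_def
  have hC₁' : 0 < C₁' := by
    have := Real.rpow_pos_of_pos hcℓ (1/α)
    positivity
  have hC₂' : 0 < C₂' := by
    have := Real.rpow_pos_of_pos hcu (1/α)
    positivity
  have hC₁'' : 0 < C₁'' := by positivity
  have hC₂'' : 0 < C₂'' := by positivity
  refine ⟨min C₁' C₁'', max C₂' C₂'', lt_min hC₁' hC₁'', lt_max_of_lt_left hC₂', ?_⟩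
  intro t ht
  have hTt : 0 < T' - t := by linarith [ht.2]
  have hTtp : 0 < (T' - t) ^ (1/α) := Real.rpow_pos_of_pos hTt _
  rcases le_or_gt t t₁ with hle | hgt
  · have htm : t ∈ Icc t₀ t₁ := ⟨ht.1, hle⟩
    constructor
    · calc min C₁' C₁'' * (T' - t) ^ (1/α) ≤ C₁'' * (T' - t) ^ (1/α) :=
            mul_le_mul_of_nonneg_right (min_le_right _ _) hTtp.le
        _ ≤ C₁'' * (T' - t₀) ^ (1/α) := by
            apply mul_le_mul_of_nonneg_left
              (Real.rpow_le_rpow hTt.le (by linarith [ht.1]) (by positivity)) hC₁''.le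
        _ = ‖y u‖ := by
            rw [hC₁''_def]
            field_simp
        _ ≤ ‖y t‖ := humin t htm
    · calc ‖y t‖ ≤ ‖y v‖ := hvmax t htm
        _ = C₂'' * (T' - t₁) ^ (1/α) := by
            rw [hC₂''_def]
            field_simp
        _ ≤ C₂'' * (T' - t) ^ (1/α) := by
            apply mul_le_mul_of_nonneg_left
              (Real.rpow_le_rpow hT₁.le (by linarith) (by positivity)) hC₂''.le
        _ ≤ max C₂' C₂'' * (T' - t) ^ (1/α) :=
            mul_le_mul_of_nonneg_right (le_max_right _ _) hTtp.le
  · obtain ⟨hlo, hhi⟩ := hmain t ⟨hgt, ht.2⟩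
    constructor
    · calc min C₁' C₁'' * (T' - t) ^ (1/α) ≤ C₁' * (T' - t) ^ (1/α) :=
            mul_le_mul_of_nonneg_right (min_le_left _ _) hTtp.le
        _ ≤ ‖y t‖ := hlo
    · calc ‖y t‖ ≤ C₂' * (T' - t) ^ (1/α) := hhi
        _ ≤ max C₂' C₂'' * (T' - t) ^ (1/α) :=
            mul_le_mul_of_nonneg_right (le_max_left _ _) hTtp.le
end
end

section
/- For all t ∈ [t₀, T*) one has |y(t)|^α = αa(T* − t) + g(t), where g(t) = −α ∫_t^{T*} |y(τ)|^{α−2} (f(τ)·y(τ)) dτ, and there exists a constant C > 0 such that |g(t)| ≤ C(T* − t)^{1 + δ/α} for all t ∈ [t₀, T*). In particular, | |y(t)|^α − αa(T* − t) | ≤ C(T* − t)^{1 + δ/α} for all t ∈ [t₀, T*). -/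
open Set Real Filter Topology MeasureTheory

noncomputable section

private theorem deriv_phi (n : ℕ) (α a : ℝ)
  (y f : ℝ → EuclideanSpace ℝ (Fin n)) (t : ℝ)
  (hy : y t ≠ 0)
  (hd : HasDerivAt y ((-(a * ‖y t‖ ^ (-α))) • y t + f t) t) :
  HasDerivAt (fun τ => ‖y τ‖ ^ α)
    (-(α*a) + α * (‖y t‖ ^ (α-2) * (inner ℝ (f t) (y t) : ℝ))) t := by
  have hr : (0:ℝ) < ‖y t‖ := norm_pos_iff.mpr hy
  have hq : HasDerivAt (fun τ => (inner ℝ (y τ) (y τ) : ℝ))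
      ((inner ℝ (y t) ((-(a * ‖y t‖ ^ (-α))) • y t + f t) : ℝ)
        + (inner ℝ ((-(a * ‖y t‖ ^ (-α))) • y t + f t) (y t) : ℝ)) t :=
    HasDerivAt.inner ℝ hd hd
  have hqpos : (0:ℝ) < (inner ℝ (y t) (y t) : ℝ) := by
    rw [real_inner_self_eq_norm_sq]; exact pow_pos hr 2
  have hq2 := hq.rpow_const (p := α/2) (Or.inl (ne_of_gt hqpos))
  have hfun : (fun τ => ‖y τ‖ ^ α) = (fun τ => ((inner ℝ (y τ) (y τ) : ℝ)) ^ (α/2)) := by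
    funext τ
    rw [real_inner_self_eq_norm_sq, ← Real.rpow_natCast (‖y τ‖) 2,
      ← Real.rpow_mul (norm_nonneg _)]
    congr 1
    push_cast
    ring
  rw [hfun]
  convert hq2 using 1
  have h1 : (inner ℝ (y t) ((-(a * ‖y t‖ ^ (-α))) • y t + f t) : ℝ)
      = -(a * ‖y t‖ ^ (-α)) * (inner ℝ (y t) (y t) : ℝ) + (inner ℝ (f t) (y t) : ℝ) := by
    rw [inner_add_right, real_inner_smul_right, real_inner_comm (y t) (f t)]
  have h2 : (inner ℝ ((-(a * ‖y t‖ ^ (-α))) • y t + f t) (y t) : ℝ)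
      = -(a * ‖y t‖ ^ (-α)) * (inner ℝ (y t) (y t) : ℝ) + (inner ℝ (f t) (y t) : ℝ) := by
    rw [inner_add_left, real_inner_smul_left]
  rw [h1, h2, real_inner_self_eq_norm_sq]
  set r := ‖y t‖ with hrdef
  have e1 : ((r ^ 2 : ℝ)) ^ (α/2 - 1) = r ^ (α - 2) := by
    rw [← Real.rpow_natCast r 2, ← Real.rpow_mul (le_of_lt hr)]
    congr 1
    push_cast
    ring
  have e3 : r ^ (α - 2) * (r:ℝ)^2 * r ^ (-α) = 1 := by
    rw [← Real.rpow_natCast r 2, ← Real.rpow_add hr, ← Real.rpow_add hr,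
      show α - 2 + (2:ℕ) + -α = 0 by push_cast; ring, Real.rpow_zero]
  have e4 : a * (r^(α-2) * (r:ℝ)^2 * r^(-α)) = a := by rw [e3, mul_one]
  rw [e1]
  linear_combination α * e4

theorem norm_power_identity_special_case (n : ℕ) (hn : 1 ≤ n)
    (α δ M a t₀ T' : ℝ) (hα : 0 < α) (hδ : 0 < δ) (hM : 0 < M) (ha : 0 < a)
    (ht₀ : 0 ≤ t₀) (hT' : t₀ < T')
    (y f : ℝ → EuclideanSpace ℝ (Fin n))
    (hycont : ContinuousOn y (Ico t₀ T'))
    (hyne : ∀ t ∈ Ico t₀ T', y t ≠ 0)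
    (hylim : Tendsto y (𝓝[<] T') (𝓝 0))
    (hode : ∀ t ∈ Ioo t₀ T', HasDerivAt y ((-(a * ‖y t‖ ^ (-α))) • y t + f t) t)
    (hfcont : ContinuousOn f (Ico t₀ T'))
    (hfb : ∀ t ∈ Ico t₀ T', ‖f t‖ ≤ M * ‖y t‖ ^ (1 - α + δ))
    :
    ∃ C : ℝ, 0 < C ∧
      ∀ t ∈ Ico t₀ T',
        ‖y t‖ ^ α = α * a * (T' - t) +
            (-α * ∫ τ in t..T', ‖y τ‖ ^ (α - 2) * (inner ℝ (f τ) (y τ) : ℝ)) ∧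
        |(-α * ∫ τ in t..T', ‖y τ‖ ^ (α - 2) * (inner ℝ (f τ) (y τ) : ℝ))| ≤
            C * (T' - t) ^ (1 + δ / α) ∧
        |‖y t‖ ^ α - α * a * (T' - t)| ≤ C * (T' - t) ^ (1 + δ / α) := by
  set h : ℝ → ℝ := fun τ => ‖y τ‖ ^ (α - 2) * (inner ℝ (f τ) (y τ) : ℝ) with hhdef
  have hrpos : ∀ t ∈ Ico t₀ T', (0:ℝ) < ‖y t‖ := fun t ht => norm_pos_iff.mpr (hyne t ht)
  -- continuity of h on [t₀, T')
  have hhcont : ContinuousOn h (Ico t₀ T') := by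
    exact (hycont.norm.rpow_const (fun t ht => Or.inl (ne_of_gt (hrpos t ht)))).mul
      (hfcont.inner hycont)
  -- global bound on ‖y‖
  obtain ⟨B, hB1, hyB⟩ : ∃ B : ℝ, 1 ≤ B ∧ ∀ t ∈ Ico t₀ T', ‖y t‖ ≤ B := by
    have hnormlim : Tendsto (fun s => ‖y s‖) (𝓝[<] T') (𝓝 0) := by
      simpa [Function.comp_def] using (continuous_norm.tendsto (0 : EuclideanSpace ℝ (Fin n))).comp hylim
    have hev : {s | ‖y s‖ < 1} ∈ 𝓝[<] T' := hnormlim (Iio_mem_nhds one_pos)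
    rw [mem_nhdsLT_iff_exists_Ioo_subset' hT'] at hev
    obtain ⟨l, hl, hlb⟩ := hev
    have hl' : max t₀ l < T' := max_lt hT' hl
    obtain ⟨C₀, hC₀⟩ := isCompact_Icc.exists_bound_of_continuousOn
      (hycont.mono (fun x hx => ⟨hx.1, lt_of_le_of_lt hx.2 hl'⟩) :
        ContinuousOn y (Icc t₀ (max t₀ l)))
    refine ⟨max 1 C₀, le_max_left _ _, fun t ht => ?_⟩
    rcases le_or_gt t (max t₀ l) with hc | hc
    · exact (hC₀ t ⟨ht.1, hc⟩).trans (le_max_right _ _)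
    · have : t ∈ Ioo l T' := ⟨lt_of_le_of_lt (le_max_right t₀ l) hc, ht.2⟩
      exact (le_of_lt (hlb this)).trans (le_max_left _ _)
  have hBpos : (0:ℝ) < B := lt_of_lt_of_le one_pos hB1
  -- pointwise bound |h τ| ≤ M * ‖y τ‖ ^ δ
  have hhb : ∀ τ ∈ Ico t₀ T', |h τ| ≤ M * ‖y τ‖ ^ δ := by
    intro τ hτ
    have hr := hrpos τ hτ
    have step1 : |h τ| ≤ ‖y τ‖^(α-2) * (‖f τ‖ * ‖y τ‖) := by
      rw [hhdef, abs_mul, abs_of_nonneg (Real.rpow_nonneg (norm_nonneg _) _)]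
      exact mul_le_mul_of_nonneg_left
        ((abs_real_inner_le_norm (f τ) (y τ)))
        (Real.rpow_nonneg (norm_nonneg _) _)
    have step2 : ‖y τ‖^(α-2) * (‖f τ‖ * ‖y τ‖)
        ≤ ‖y τ‖^(α-2) * ((M * ‖y τ‖^(1-α+δ)) * ‖y τ‖) := by
      have := hfb τ hτ
      have h0 : (0:ℝ) ≤ ‖y τ‖^(α-2) := Real.rpow_nonneg (norm_nonneg _) _
      gcongr
    have key : ‖y τ‖^(α-2) * ‖y τ‖^(1-α+δ) * ‖y τ‖^(1:ℝ) = ‖y τ‖^δ := by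
      rw [← Real.rpow_add hr, ← Real.rpow_add hr]
      congr 1
      ring
    have step3 : ‖y τ‖^(α-2) * ((M * ‖y τ‖^(1-α+δ)) * ‖y τ‖) = M * ‖y τ‖ ^ δ := by
      calc ‖y τ‖^(α-2) * ((M * ‖y τ‖^(1-α+δ)) * ‖y τ‖)
          = M * (‖y τ‖^(α-2) * ‖y τ‖^(1-α+δ) * ‖y τ‖^(1:ℝ)) := by
            rw [Real.rpow_one]; ring
        _ = M * ‖y τ‖^δ := by rw [key]
    linarith
  -- bound by a constant
  have hhbc : ∀ τ ∈ Ico t₀ T', |h τ| ≤ M * B ^ δ := by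
    intro τ hτ
    refine (hhb τ hτ).trans ?_
    exact mul_le_mul_of_nonneg_left
      (Real.rpow_le_rpow (norm_nonneg _) (hyB τ hτ) (le_of_lt hδ)) hM.le
  -- a.e. every point differs from T'
  have haeT : ∀ᵐ x : ℝ, x ≠ T' := by
    have h0 : (volume : Measure ℝ) {T'} = 0 := measure_singleton T'
    filter_upwards [measure_eq_zero_iff_ae_notMem.mp h0] with x hx using hx
  -- interval integrability up to T'
  have hint : ∀ t ∈ Ico t₀ T', IntervalIntegrable h volume t T' := by
    intro t ht
    rw [intervalIntegrable_iff_integrableOn_Ioc_of_le (le_of_lt ht.2)]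
    have hsub : Ioo t T' ⊆ Ico t₀ T' := fun x hx => ⟨le_trans ht.1 (le_of_lt hx.1), hx.2⟩
    have hIoo : IntegrableOn h (Ioo t T') := by
      refine Integrable.mono' (g := fun _ => M * B ^ δ)
        (integrableOn_const measure_Ioo_lt_top.ne)
        ((hhcont.mono hsub).aestronglyMeasurable measurableSet_Ioo) ?_
      rw [ae_restrict_iff' measurableSet_Ioo]
      exact ae_of_all _ fun x hx => by
        rw [Real.norm_eq_abs]; exact hhbc x (hsub hx)
    exact hIoo.congr_set_ae Ioo_ae_eq_Ioc.symm
  -- subinterval integrability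
  have hint2 : ∀ t s : ℝ, t₀ ≤ t → t ≤ s → s < T' → IntervalIntegrable h volume t s := by
    intro t s h1 h2 h3
    apply ContinuousOn.intervalIntegrable
    rw [uIcc_of_le h2]
    exact hhcont.mono (fun x hx => ⟨le_trans h1 hx.1, lt_of_le_of_lt hx.2 h3⟩)
  -- FTC on subintervals
  have hFTC : ∀ t ∈ Ico t₀ T', ∀ s ∈ Ico t₀ T', t ≤ s →
      ‖y s‖^α - ‖y t‖^α = -(α*a)*(s-t) + α * ∫ τ in t..s, h τ := by
    intro t ht s hs hts
    have hsub : Icc t s ⊆ Ico t₀ T' := fun x hx => ⟨le_trans ht.1 hx.1, lt_of_le_of_lt hx.2 hs.2⟩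
    have hi : IntervalIntegrable (fun τ => -(α*a) + α * h τ) volume t s :=
      (intervalIntegrable_const).add ((hint2 t s ht.1 hts hs.2).const_mul α)
    have heq := intervalIntegral.integral_eq_sub_of_hasDeriv_right_of_le hts
      ((hycont.mono hsub).norm.rpow_const fun x hx => Or.inl (ne_of_gt (hrpos x (hsub hx))))
      (fun x hx => (deriv_phi n α a y f x
        (hyne x ⟨le_trans ht.1 (le_of_lt hx.1), lt_trans hx.2 hs.2⟩)
        (hode x ⟨lt_of_le_of_lt ht.1 hx.1, lt_trans hx.2 hs.2⟩)).hasDerivWithinAt)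
      hi
    rw [intervalIntegral.integral_add intervalIntegrable_const
        ((hint2 t s ht.1 hts hs.2).const_mul α),
      intervalIntegral.integral_const, intervalIntegral.integral_const_mul, smul_eq_mul] at heq
    rw [← heq]
    ring
  -- key identity
  have hId : ∀ t ∈ Ico t₀ T',
      ‖y t‖^α = α*a*(T'-t) + (-α * ∫ τ in t..T', h τ) := by
    intro t ht
    have htT : t < T' := ht.2
    haveI : (𝓝[<] T').NeBot := nhdsLT_neBot T'
    have htail : Tendsto (fun s => ∫ τ in s..T', h τ) (𝓝[<] T') (𝓝 0) := by
      apply squeeze_zero_norm' (a := fun s => M*B^δ*(T' - s))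
      · filter_upwards [Ioo_mem_nhdsLT htT] with s hs
        have hb : ∀ᵐ x : ℝ, x ∈ uIoc s T' → ‖h x‖ ≤ M*B^δ := by
          filter_upwards [haeT] with x hx hxm
          rw [uIoc_of_le (le_of_lt hs.2)] at hxm
          have hxIco : x ∈ Ico t₀ T' :=
            ⟨le_trans ht.1 (le_trans (le_of_lt hs.1) (le_of_lt hxm.1)),
              lt_of_le_of_ne hxm.2 hx⟩
          rw [Real.norm_eq_abs]; exact hhbc x hxIco
        calc ‖∫ τ in s..T', h τ‖ ≤ M*B^δ * |T' - s| :=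
              intervalIntegral.norm_integral_le_of_norm_le_const_ae hb
          _ = M*B^δ * (T' - s) := by
              rw [abs_of_nonneg (by linarith [hs.2] : (0:ℝ) ≤ T' - s)]
      · have h0 : Tendsto (fun s : ℝ => M*B^δ*(T' - s)) (𝓝 T') (𝓝 (M*B^δ*(T'-T'))) :=
          tendsto_const_nhds.mul (tendsto_const_nhds.sub tendsto_id)
        simpa using h0.mono_left nhdsWithin_le_nhds
    have hIST : ∀ s ∈ Ioo t T',
        (∫ τ in t..s, h τ) = (∫ τ in t..T', h τ) - ∫ τ in s..T', h τ := by
      intro s hs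
      have h1 : IntervalIntegrable h volume t s := hint2 t s ht.1 (le_of_lt hs.1) hs.2
      have h2 : IntervalIntegrable h volume s T' :=
        hint s ⟨le_trans ht.1 (le_of_lt hs.1), hs.2⟩
      have := intervalIntegral.integral_add_adjacent_intervals h1 h2
      linarith
    have hlitend : Tendsto
        (fun s => ‖y t‖^α + (-(α*a)*(s-t) + α * ∫ τ in t..s, h τ)) (𝓝[<] T')
        (𝓝 (‖y t‖^α + (-(α*a)*(T'-t) + α * ∫ τ in t..T', h τ))) := by
      apply Tendsto.const_add
      apply Tendsto.add
      · have h0 : Tendsto (fun s : ℝ => -(α*a)*(s-t)) (𝓝 T') (𝓝 (-(α*a)*(T'-t))) :=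
          tendsto_const_nhds.mul (tendsto_id.sub tendsto_const_nhds)
        exact h0.mono_left nhdsWithin_le_nhds
      · have h0 : Tendsto (fun s => α * ((∫ τ in t..T', h τ) - ∫ τ in s..T', h τ)) (𝓝[<] T')
            (𝓝 (α * ((∫ τ in t..T', h τ) - 0))) :=
          tendsto_const_nhds.mul (tendsto_const_nhds.sub htail)
        rw [sub_zero] at h0
        apply h0.congr'
        filter_upwards [Ioo_mem_nhdsLT htT] with s hs
        rw [hIST s hs]
    have hlphi : Tendsto (fun s => ‖y s‖^α) (𝓝[<] T') (𝓝 0) := by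
      have h0 : Tendsto (fun s => ‖y s‖) (𝓝[<] T') (𝓝 0) := by
        simpa [Function.comp_def] using (continuous_norm.tendsto (0:EuclideanSpace ℝ (Fin n))).comp hylim
      have h1 := (Real.continuousAt_rpow_const 0 α (Or.inr hα.le)).tendsto.comp h0
      simpa [Function.comp_def, Real.zero_rpow (ne_of_gt hα)] using h1
    have hevq : ∀ᶠ s in 𝓝[<] T',
        ‖y s‖^α = ‖y t‖^α + (-(α*a)*(s-t) + α * ∫ τ in t..s, h τ) := by
      filter_upwards [Ioo_mem_nhdsLT htT] with s hs
      have := hFTC t ht s ⟨le_trans ht.1 (le_of_lt hs.1), hs.2⟩ (le_of_lt hs.1)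
      linarith
    have huniq := tendsto_nhds_unique (hlphi.congr' hevq) hlitend
    linear_combination -huniq
  -- crude integral bound
  have hIb : ∀ t ∈ Ico t₀ T', |∫ τ in t..T', h τ| ≤ (M*B^δ) * (T'-t) := by
    intro t ht
    have hb : ∀ᵐ x : ℝ, x ∈ uIoc t T' → ‖h x‖ ≤ M*B^δ := by
      filter_upwards [haeT] with x hx hxm
      rw [uIoc_of_le (le_of_lt ht.2)] at hxm
      have hxIco : x ∈ Ico t₀ T' := ⟨le_trans ht.1 (le_of_lt hxm.1), lt_of_le_of_ne hxm.2 hx⟩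
      rw [Real.norm_eq_abs]; exact hhbc x hxIco
    have h0 := intervalIntegral.norm_integral_le_of_norm_le_const_ae hb
    rwa [Real.norm_eq_abs, abs_of_nonneg (by linarith [ht.2] : (0:ℝ) ≤ T'-t)] at h0
  set K : ℝ := α*a + α*(M*B^δ) with hK
  have hKpos : 0 < K := by positivity
  have hφle : ∀ t ∈ Ico t₀ T', ‖y t‖^α ≤ K*(T'-t) := by
    intro t ht
    rw [hId t ht]
    have h1 := hIb t ht
    have h2 : -α * ∫ τ in t..T', h τ ≤ α * ((M*B^δ)*(T'-t)) := by
      have h3 : -(∫ τ in t..T', h τ) ≤ |∫ τ in t..T', h τ| := neg_le_abs _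
      calc -α * ∫ τ in t..T', h τ = α * (-(∫ τ in t..T', h τ)) := by ring
        _ ≤ α * |∫ τ in t..T', h τ| := mul_le_mul_of_nonneg_left h3 hα.le
        _ ≤ α * ((M*B^δ)*(T'-t)) := mul_le_mul_of_nonneg_left h1 hα.le
    calc α*a*(T'-t) + (-α * ∫ τ in t..T', h τ)
        ≤ α*a*(T'-t) + α*((M*B^δ)*(T'-t)) := by linarith
      _ = K*(T'-t) := by rw [hK]; ring
  have hα' : α ≠ 0 := ne_of_gt hα
  have hyδ : ∀ τ ∈ Ico t₀ T', ‖y τ‖^δ ≤ K^(δ/α) * (T'-τ)^(δ/α) := by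
    intro τ hτ
    have h1 := hφle τ hτ
    have h2 : ((‖y τ‖^α))^(δ/α) ≤ (K*(T'-τ))^(δ/α) :=
      Real.rpow_le_rpow (Real.rpow_nonneg (norm_nonneg _) _) h1 (by positivity)
    rwa [← Real.rpow_mul (norm_nonneg _), show α*(δ/α) = δ by field_simp,
      Real.mul_rpow hKpos.le (by linarith [hτ.2] : (0:ℝ) ≤ T'-τ)] at h2
  -- final constant
  refine ⟨α*M*K^(δ/α) + 1, by positivity, fun t ht => ?_⟩
  have htT : t < T' := ht.2
  have hTt0 : (0:ℝ) < T' - t := by linarith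
  have hb2 : ∀ᵐ x : ℝ, x ∈ uIoc t T' → ‖h x‖ ≤ M*K^(δ/α)*(T'-t)^(δ/α) := by
    filter_upwards [haeT] with x hx hxm
    rw [uIoc_of_le (le_of_lt htT)] at hxm
    have hxIco : x ∈ Ico t₀ T' := ⟨le_trans ht.1 (le_of_lt hxm.1), lt_of_le_of_ne hxm.2 hx⟩
    rw [Real.norm_eq_abs]
    have h4 : (T'-x)^(δ/α) ≤ (T'-t)^(δ/α) :=
      Real.rpow_le_rpow (by linarith [hxIco.2] : (0:ℝ) ≤ T'-x)
        (by linarith [hxm.1]) (by positivity)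
    calc |h x| ≤ M * ‖y x‖^δ := hhb x hxIco
      _ ≤ M * (K^(δ/α) * (T'-x)^(δ/α)) := mul_le_mul_of_nonneg_left (hyδ x hxIco) hM.le
      _ ≤ M * (K^(δ/α) * (T'-t)^(δ/α)) := by
          refine mul_le_mul_of_nonneg_left (mul_le_mul_of_nonneg_left h4 ?_) hM.le
          exact Real.rpow_nonneg hKpos.le _
      _ = M*K^(δ/α)*(T'-t)^(δ/α) := by ring
  have hIb2 := intervalIntegral.norm_integral_le_of_norm_le_const_ae hb2
  rw [Real.norm_eq_abs, abs_of_nonneg hTt0.le] at hIb2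
  have hpow : (T'-t)^(δ/α) * (T'-t) = (T'-t)^(1+δ/α) := by
    rw [Real.rpow_add hTt0, Real.rpow_one]; ring
  have hgb : |(-α * ∫ τ in t..T', h τ)| ≤ (α*M*K^(δ/α)) * (T'-t)^(1+δ/α) := by
    rw [abs_mul, abs_neg, abs_of_pos hα]
    calc α * |∫ τ in t..T', h τ| ≤ α * (M*K^(δ/α)*(T'-t)^(δ/α) * (T'-t)) :=
          mul_le_mul_of_nonneg_left hIb2 hα.le
      _ = (α*M*K^(δ/α)) * ((T'-t)^(δ/α)*(T'-t)) := by ring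
      _ = (α*M*K^(δ/α)) * (T'-t)^(1+δ/α) := by rw [hpow]
  have hCb : (α*M*K^(δ/α)) * (T'-t)^(1+δ/α) ≤ (α*M*K^(δ/α)+1) * (T'-t)^(1+δ/α) := by
    have h5 : (0:ℝ) ≤ (T'-t)^(1+δ/α) := Real.rpow_nonneg hTt0.le _
    nlinarith
  refine ⟨hId t ht, hgb.trans hCb, ?_⟩
  rw [hId t ht, add_sub_cancel_left]
  exact hgb.trans hCb
end
end
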